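/- arXiv:1804.05558 — 3 statements merged into one kernel-verified Lean document; each statement's English description precedes it below -/
import Mathlib

section
/- Let $\vec a=(a_1,\dots,a_n)\in[1,\infty)^n$, $\vec p=(p_1,\dots,p_n)\in(0,1]^n$, $r\in(1,\infty]$ with conjugate exponent $r'$ ($1/r+1/r'=1$), and $s\in\mathbb{Z}_+$ with $s\ge\lfloor\frac{\nu}{a_-}(\frac{1}{p_-}-1)\rfloor$, where $\nu:=a_1+\cdots+a_n$, $a_-:=\min_i a_i$ and $p_-:=\min_i p_i$. If $g$ is a locally $r'$-integrable function on $\mathbb{R}^n$ with $\|g\|_{\mathcal L^{\vec a}_{\vec p,r',s}(\mathbb{R}^n)}<\infty$, then for every $m\in\mathbb{N}$, all $\lambda_1,\dots,\lambda_m\in\mathbb{C}$ and all $(\vec p,r,s)$-atoms $a_1,\dots,a_m$ supported, respectively, on anisotropic balls $B_1,\dots,B_m\in\mathfrak B$, the function $f:=\sum_{i=1}^m\lambda_i a_i$ satisfies $\big|\int_{\mathbb{R}^n} f(x)g(x)\,dx\big|\le\big\|\{\sum_{i=1}^m[|\lambda_i|\chi_{B_i}/\|\chi_{B_i}\|_{L^{\vec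 p}(\mathbb{R}^n)}]^{p_-}\}^{1/p_-}\big\|_{L^{\vec p}(\mathbb{R}^n)}\cdot\|g\|_{\mathcal L^{\vec a}_{\vec p,r',s}(\mathbb{R}^n)}$. -/
open MeasureTheory ENNReal Filter

noncomputable section

/-- The anisotropic homogeneous quasi-norm associated with `a`. -/
def anorm {n : ℕ} (a x : Fin n → ℝ) : ℝ :=
  sInf {t : ℝ | 0 < t ∧ ∑ i, x i ^ 2 / t ^ (2 * a i) = 1}

/-- The anisotropic ball with center `x` and radius `r`. -/
def aball {n : ℕ} (a x : Fin n → ℝ) (r : ℝ) : Set (Fin n → ℝ) :=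
  {y | anorm a (y - x) < r}

/-- The collection `𝔅` of all anisotropic balls. -/
def aballs {n : ℕ} (a : Fin n → ℝ) : Set (Set (Fin n → ℝ)) :=
  {B | ∃ x r, 0 < r ∧ B = aball a x r}

/-- Iterated mixed-norm of a nonnegative function: integrate the first variable
with exponent `p 0` (essential supremum if `p 0 = ∞`), then recurse. -/
def mixedNormF : {n : ℕ} → (Fin n → ℝ≥0∞) → ((Fin n → ℝ) → ℝ≥0∞) → ℝ≥0∞
  | 0, _, f => f fun i => i.elim0
  | _ + 1, p, f =>
    mixedNormF (fun i => p i.succ) fun y =>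
      if p 0 = ∞ then essSup (fun t => f (Fin.cons t y)) volume
      else (∫⁻ t, f (Fin.cons t y) ^ (p 0).toReal) ^ (1 / (p 0).toReal)

/-- The mixed-norm Lebesgue quasi-norm `‖f‖_{L^{p⃗}(ℝⁿ)}`. -/
def mixedNorm {n : ℕ} (p : Fin n → ℝ≥0∞) (f : (Fin n → ℝ) → ℂ) : ℝ≥0∞ :=
  mixedNormF p fun x => (‖f x‖₊ : ℝ≥0∞)

/-- `‖χ_B‖_{L^{p⃗}(ℝⁿ)}`. -/
def chiNorm {n : ℕ} (p : Fin n → ℝ≥0∞) (B : Set (Fin n → ℝ)) : ℝ≥0∞ :=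
  mixedNormF p (B.indicator fun _ => 1)

/-- `P` is (the function given by) a polynomial on `ℝⁿ` of total degree at most `s`. -/
def IsPolyDeg {n : ℕ} (s : ℕ) (P : (Fin n → ℝ) → ℂ) : Prop :=
  ∃ Q : MvPolynomial (Fin n) ℂ, Q.totalDegree ≤ s ∧
    ∀ x, P x = MvPolynomial.eval (fun i => (x i : ℂ)) Q

/-- The anisotropic mixed-norm Campanato quasi-norm `‖g‖_{𝓛^{a⃗}_{p⃗,q,s}(ℝⁿ)}`. -/
def campanatoNorm {n : ℕ} (a : Fin n → ℝ) (p : Fin n → ℝ≥0∞) (q : ℝ≥0∞) (s : ℕ)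
    (g : (Fin n → ℝ) → ℂ) : ℝ≥0∞ :=
  ⨆ B ∈ aballs a, ⨅ P ∈ {P : (Fin n → ℝ) → ℂ | IsPolyDeg s P},
    volume B / chiNorm p B *
      (if q = ∞ then essSup (fun x => (‖g x - P x‖₊ : ℝ≥0∞)) (volume.restrict B)
       else ((volume B)⁻¹ * ∫⁻ x in B, (‖g x - P x‖₊ : ℝ≥0∞) ^ q.toReal) ^ (1 / q.toReal))

/-- Local `q`-integrability on `ℝⁿ`. -/
def LocLp {n : ℕ} (q : ℝ≥0∞) (g : (Fin n → ℝ) → ℂ) : Prop :=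
  ∀ K : Set (Fin n → ℝ), IsCompact K → MemLp g q (volume.restrict K)

/-- The homogeneous dimension `ν = a_1 + ⋯ + a_n`. -/
def nuTotal {n : ℕ} (a : Fin n → ℝ) : ℝ := ∑ i, a i

/-- `a₋ = min {a_1, …, a_n}`. -/
def aMin {n : ℕ} (a : Fin n → ℝ) : ℝ := ⨅ i, a i

/-- `p₋ = min {p_1, …, p_n}`. -/
def pMinE {n : ℕ} (p : Fin n → ℝ≥0∞) : ℝ≥0∞ := ⨅ i, p i

/-- An anisotropic mixed-norm `(p⃗, r, s)`-atom supported on the anisotropic ball `B`. -/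
structure IsAtomFn {n : ℕ} (a : Fin n → ℝ) (p : Fin n → ℝ≥0∞) (r : ℝ≥0∞) (s : ℕ)
    (f : (Fin n → ℝ) → ℂ) (B : Set (Fin n → ℝ)) : Prop where
  measurable : Measurable f
  ball_mem : B ∈ aballs a
  support_subset : Function.support f ⊆ B
  size : eLpNorm f r volume ≤ volume B ^ (1 / r).toReal / chiNorm p B
  moments : ∀ α : Fin n → ℕ, (∑ i, α i) ≤ s → (∫ x, f x * ∏ i, (x i : ℂ) ^ α i) = 0

/-- The quantity `‖{∑_i [|λ_i| χ_{B_i} / ‖χ_{B_i}‖]^{p₋}}^{1/p₋}‖_{L^{p⃗}}` for a sequence. -/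
def atomSeqNorm {n : ℕ} (p : Fin n → ℝ≥0∞) (lam : ℕ → ℂ) (B : ℕ → Set (Fin n → ℝ)) : ℝ≥0∞ :=
  mixedNormF p fun x =>
    (∑' i, ((‖lam i‖₊ : ℝ≥0∞) * (B i).indicator (fun _ => 1) x / chiNorm p (B i))
        ^ (pMinE p).toReal) ^ (1 / (pMinE p).toReal)

/-- The quantity `‖{∑_{i=1}^m [|λ_i| χ_{B_i} / ‖χ_{B_i}‖]^{p₋}}^{1/p₋}‖_{L^{p⃗}}`
for a finite family. -/
def atomFinNorm {n : ℕ} (p : Fin n → ℝ≥0∞) {m : ℕ} (lam : Fin m → ℂ)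
    (B : Fin m → Set (Fin n → ℝ)) : ℝ≥0∞ :=
  mixedNormF p fun x =>
    (∑ i, ((‖lam i‖₊ : ℝ≥0∞) * (B i).indicator (fun _ => 1) x / chiNorm p (B i))
        ^ (pMinE p).toReal) ^ (1 / (pMinE p).toReal)

/-- Tempered distributions on `ℝⁿ`. -/
abbrev TDist (n : ℕ) := SchwartzMap (Fin n → ℝ) ℂ →L[ℂ] ℂ

/-- `T = ∑_i λ_i a_i` in `𝒮'(ℝⁿ)` with the `a_i` being `(p⃗,r,s)`-atoms on balls `B i`. -/
def HasAtomicRep {n : ℕ} (a : Fin n → ℝ) (p : Fin n → ℝ≥0∞) (r : ℝ≥0∞) (s : ℕ)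
    (T : TDist n) (lam : ℕ → ℂ) (A : ℕ → (Fin n → ℝ) → ℂ)
    (B : ℕ → Set (Fin n → ℝ)) : Prop :=
  (∀ i, IsAtomFn a p r s (A i) (B i)) ∧
    ∀ φ : SchwartzMap (Fin n → ℝ) ℂ,
      Filter.Tendsto (fun N => ∑ i ∈ Finset.range N, lam i * ∫ x, A i x * φ x)
        Filter.atTop (nhds (T φ))

/-- Membership in the anisotropic mixed-norm atomic Hardy space. -/
def MemHardy {n : ℕ} (a : Fin n → ℝ) (p : Fin n → ℝ≥0∞) (r : ℝ≥0∞) (s : ℕ)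
    (T : TDist n) : Prop :=
  ∃ lam A B, HasAtomicRep a p r s T lam A B

/-- The atomic Hardy space quasi-norm. -/
def hardyNorm {n : ℕ} (a : Fin n → ℝ) (p : Fin n → ℝ≥0∞) (r : ℝ≥0∞) (s : ℕ)
    (T : TDist n) : ℝ≥0∞ :=
  ⨅ (lam : ℕ → ℂ) (A : ℕ → (Fin n → ℝ) → ℂ) (B : ℕ → Set (Fin n → ℝ))
    (_ : HasAtomicRep a p r s T lam A B), atomSeqNorm p lam B

/-- `‖L‖ = sup {|L f| : f ∈ H, ‖f‖_H ≤ 1}`. -/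
def hardyOpNorm {n : ℕ} (a : Fin n → ℝ) (p : Fin n → ℝ≥0∞) (r : ℝ≥0∞) (s : ℕ)
    (L : TDist n → ℂ) : ℝ≥0∞ :=
  ⨆ T ∈ {T : TDist n | MemHardy a p r s T ∧ hardyNorm a p r s T ≤ 1}, (‖L T‖₊ : ℝ≥0∞)

/-- `P = Π_B f` is the natural projection of `f` onto polynomials of degree at most `s`
relative to `B`. -/
def IsProj {n : ℕ} (s : ℕ) (B : Set (Fin n → ℝ)) (f P : (Fin n → ℝ) → ℂ) : Prop :=
  IsPolyDeg s P ∧ ∀ q : (Fin n → ℝ) → ℂ, IsPolyDeg s q →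
    (∫ x in B, P x * q x) = ∫ x in B, f x * q x


section Geo

variable {n : ℕ} {a : Fin n → ℝ}

lemma phi_strictAntiOn (ha : ∀ i, 1 ≤ a i) {z : Fin n → ℝ} {i0 : Fin n} (hz : z i0 ≠ 0) :
    StrictAntiOn (fun t : ℝ => ∑ i, z i ^ 2 / t ^ (2 * a i)) (Set.Ioi 0) := by
  intro s hs t ht hst
  simp only [Set.mem_Ioi] at hs ht
  apply Finset.sum_lt_sum
  · intro i _
    apply div_le_div_of_nonneg_left (by positivity) (Real.rpow_pos_of_pos hs _)
    exact Real.rpow_le_rpow hs.le hst.le (by linarith [ha i])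
  · refine ⟨i0, Finset.mem_univ _, ?_⟩
    apply div_lt_div_of_pos_left (by positivity) (Real.rpow_pos_of_pos hs _)
    exact Real.rpow_lt_rpow hs.le hst (by linarith [ha i0])

lemma phi_exists_root (ha : ∀ i, 1 ≤ a i) {z : Fin n → ℝ} {i0 : Fin n} (hz : z i0 ≠ 0) :
    ∃ t0 : ℝ, 0 < t0 ∧ ∑ i, z i ^ 2 / t0 ^ (2 * a i) = 1 := by
  set φ : ℝ → ℝ := fun t => ∑ i, z i ^ 2 / t ^ (2 * a i) with hφ
  set M : ℝ := ∑ i, z i ^ 2 with hM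
  have hM0 : 0 < M := by
    apply Finset.sum_pos' (fun i _ => by positivity)
    exact ⟨i0, Finset.mem_univ _, by positivity⟩
  -- continuity on Ioi 0
  have hcont : ContinuousOn φ (Set.Ioi 0) := by
    apply continuousOn_finset_sum
    intro i _
    apply ContinuousOn.div continuousOn_const
    · intro t ht
      exact (Real.continuousAt_rpow_const t (2 * a i) (Or.inl (ne_of_gt ht))).continuousWithinAt
    · intro t ht
      exact ne_of_gt (Real.rpow_pos_of_pos ht _)
  -- lower bound for small t, upper for large t
  have key_small : ∀ t : ℝ, 0 < t → t ≤ 1 → M / t ^ (2:ℝ) ≤ φ t := by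
    intro t ht ht1
    rw [hM, Finset.sum_div]
    apply Finset.sum_le_sum
    intro i _
    apply div_le_div_of_nonneg_left (by positivity) (Real.rpow_pos_of_pos ht _)
    exact Real.rpow_le_rpow_of_exponent_ge ht ht1 (by linarith [ha i])
  have key_large : ∀ t : ℝ, 1 ≤ t → φ t ≤ M / t ^ (2:ℝ) := by
    intro t ht
    rw [hM, Finset.sum_div]
    apply Finset.sum_le_sum
    intro i _
    apply div_le_div_of_nonneg_left (by positivity) (by positivity)
    exact Real.rpow_le_rpow_of_exponent_le ht (by linarith [ha i])
  set t1 : ℝ := min 1 M with ht1def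
  set t2 : ℝ := max 1 M with ht2def
  have ht1pos : 0 < t1 := lt_min one_pos hM0
  have ht12 : t1 ≤ t2 := le_trans (min_le_left _ _) (le_max_left _ _)
  have h1 : 1 ≤ φ t1 := by
    rcases le_or_gt 1 M with h | h
    · have : t1 = 1 := min_eq_left h
      rw [this]
      refine le_trans ?_ (key_small 1 one_pos le_rfl)
      rw [Real.one_rpow]
      simpa using h
    · have hteq : t1 = M := min_eq_right h.le
      refine le_trans ?_ (key_small t1 ht1pos (min_le_left _ _))
      rw [hteq]
      rw [show (2:ℝ) = ((2:ℕ):ℝ) by norm_num, Real.rpow_natCast]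
      rw [le_div_iff₀ (by positivity)]
      nlinarith
  have h2 : φ t2 ≤ 1 := by
    rcases le_or_gt M 1 with h | h
    · have : t2 = 1 := max_eq_left h
      rw [this]
      refine le_trans (key_large 1 le_rfl) ?_
      rw [Real.one_rpow]
      simpa using h
    · have hteq : t2 = M := max_eq_right h.le
      refine le_trans (key_large t2 (le_max_left _ _)) ?_
      rw [hteq]
      rw [show (2:ℝ) = ((2:ℕ):ℝ) by norm_num, Real.rpow_natCast]
      rw [div_le_one (by positivity)]
      nlinarith
  have : (1:ℝ) ∈ Set.Icc (φ t2) (φ t1) := ⟨h2, h1⟩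
  have hIcc : Set.Icc t1 t2 ⊆ Set.Ioi 0 := fun t htt => lt_of_lt_of_le ht1pos htt.1
  have := intermediate_value_Icc' ht12 (hcont.mono hIcc) this
  obtain ⟨t0, ht0mem, ht0⟩ := this
  exact ⟨t0, lt_of_lt_of_le ht1pos ht0mem.1, ht0⟩

lemma anorm_lt_iff (ha : ∀ i, 1 ≤ a i) {r : ℝ} (hr : 0 < r) (z : Fin n → ℝ) :
    anorm a z < r ↔ ∑ i, z i ^ 2 / r ^ (2 * a i) < 1 := by
  by_cases hz : ∀ i, z i = 0
  · have h1 : ∀ t : ℝ, ∑ i, z i ^ 2 / t ^ (2 * a i) = 0 := by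
      intro t; apply Finset.sum_eq_zero; intro i _; rw [hz i]; simp
    have : {t : ℝ | 0 < t ∧ ∑ i, z i ^ 2 / t ^ (2 * a i) = 1} = ∅ := by
      ext t; simp [h1 t]
    rw [anorm, this, Real.sInf_empty, h1 r]
    simp [hr]
  · push_neg at hz
    obtain ⟨i0, hi0⟩ := hz
    obtain ⟨t0, ht0pos, ht0⟩ := phi_exists_root ha hi0
    have hanti := phi_strictAntiOn ha hi0
    have hset : {t : ℝ | 0 < t ∧ ∑ i, z i ^ 2 / t ^ (2 * a i) = 1} = {t0} := by
      ext t
      simp only [Set.mem_setOf_eq, Set.mem_singleton_iff]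
      constructor
      · rintro ⟨htpos, ht⟩
        by_contra hne
        rcases lt_or_gt_of_ne hne with h | h
        · have := hanti htpos ht0pos h
          simp only at this; rw [ht, ht0] at this; exact lt_irrefl _ this
        · have := hanti ht0pos htpos h
          simp only at this; rw [ht, ht0] at this; exact lt_irrefl _ this
      · rintro rfl; exact ⟨ht0pos, ht0⟩
    rw [anorm, hset, csInf_singleton]
    constructor
    · intro h
      have := hanti ht0pos hr h
      simp only at this; rwa [ht0] at this
    · intro h
      by_contra hle
      push_neg at hle
      rcases eq_or_lt_of_le hle with rfl | hlt
      · rw [ht0] at h; exact lt_irrefl _ h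
      · have := hanti hr ht0pos hlt
        simp only at this; rw [ht0] at this; linarith

lemma aball_eq (ha : ∀ i, 1 ≤ a i) (x : Fin n → ℝ) {r : ℝ} (hr : 0 < r) :
    aball a x r = {y | ∑ i, (y i - x i) ^ 2 / r ^ (2 * a i) < 1} := by
  ext y
  rw [aball, Set.mem_setOf_eq, anorm_lt_iff ha hr]
  simp [Pi.sub_apply]

end Geo

section Mixed

/-- reverse Minkowski (superadditivity of the `L^p` norm for `p ≤ 1`). -/
lemma rev_minkowski {α : Type*} [MeasurableSpace α] (μ : Measure α) {p : ℝ}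
    (hp0 : 0 < p) (hp1 : p ≤ 1) {f g : α → ℝ≥0∞}
    (hf : AEMeasurable f μ) (hg : AEMeasurable g μ) :
    (∫⁻ x, f x ^ p ∂μ) ^ (1 / p) + (∫⁻ x, g x ^ p ∂μ) ^ (1 / p) ≤
      (∫⁻ x, (f x + g x) ^ p ∂μ) ^ (1 / p) := by
  rcases eq_or_lt_of_le hp1 with rfl | hplt
  · simp only [ENNReal.rpow_one, one_div_one]
    rw [lintegral_add_left' hf]
  set T := ∫⁻ x, (f x + g x) ^ p ∂μ with hT
  have hfg : AEMeasurable (fun x => f x + g x) μ := hf.add hg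
  rcases eq_or_ne T ∞ with hTtop | hTtop
  · rw [hTtop, ENNReal.top_rpow_of_pos (by positivity)]; exact le_top
  rcases eq_or_ne T 0 with hT0 | hT0
  · have hz : (fun x => (f x + g x) ^ p) =ᵐ[μ] 0 :=
      (lintegral_eq_zero_iff' (hfg.pow_const p)).mp hT0
    have hz' : (fun x => f x + g x) =ᵐ[μ] 0 := by
      filter_upwards [hz] with x hx
      simpa [ENNReal.rpow_eq_zero_iff_of_pos hp0] using hx
    have hf0 : ∫⁻ x, f x ^ p ∂μ = 0 := by
      rw [lintegral_eq_zero_iff' (hf.pow_const p)]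
      filter_upwards [hz'] with x hx
      have : f x = 0 := le_antisymm (le_trans le_self_add (le_of_eq hx)) zero_le
      simp [this, ENNReal.zero_rpow_of_pos hp0]
    have hg0 : ∫⁻ x, g x ^ p ∂μ = 0 := by
      rw [lintegral_eq_zero_iff' (hg.pow_const p)]
      filter_upwards [hz'] with x hx
      have : g x = 0 := le_antisymm (le_trans le_add_self (le_of_eq hx)) zero_le
      simp [this, ENNReal.zero_rpow_of_pos hp0]
    rw [hf0, hg0]
    simp [ENNReal.zero_rpow_of_pos (show (0:ℝ) < p⁻¹ by positivity)]
  -- main case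
  have hfin : ∀ᵐ x ∂μ, f x + g x ≠ ∞ := by
    have := ae_lt_top' (hfg.pow_const p) hTtop
    filter_upwards [this] with x hx
    intro hcon
    rw [hcon, ENNReal.top_rpow_of_pos hp0] at hx
    exact (lt_irrefl _ hx).elim
  have hconj : Real.HolderConjugate (1 / p) (1 / (1 - p)) := by
    rw [Real.holderConjugate_iff]
    constructor
    · rw [lt_div_iff₀ hp0]; linarith
    · rw [one_div, inv_inv, one_div, inv_inv]; ring
  have key : ∀ h : α → ℝ≥0∞, AEMeasurable h μ → (∀ x, h x ≤ f x + g x) →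
      ∫⁻ x, h x ^ p ∂μ ≤ (∫⁻ x, h x * (f x + g x) ^ (p - 1) ∂μ) ^ p * T ^ (1 - p) := by
    intro h hh hle
    set u : α → ℝ≥0∞ := fun x => (h x * (f x + g x) ^ (p - 1)) ^ p with hu
    set v : α → ℝ≥0∞ := fun x => ((f x + g x) ^ p) ^ (1 - p) with hv
    have hueq : ∀ᵐ x ∂μ, h x ^ p = u x * v x := by
      filter_upwards [hfin] with x hx
      rcases eq_or_ne (f x + g x) 0 with h0 | h0
      · have : h x = 0 := le_antisymm (le_trans (hle x) (le_of_eq h0)) zero_le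
        simp [hu, hv, this, h0, ENNReal.zero_rpow_of_pos hp0,
          ENNReal.zero_rpow_of_pos (show (0:ℝ) < 1 - p by linarith)]
      · simp only [hu, hv]
        rw [ENNReal.mul_rpow_of_nonneg _ _ hp0.le, ← ENNReal.rpow_mul, ← ENNReal.rpow_mul,
          mul_assoc, ← ENNReal.rpow_add _ _ h0 hx]
        rw [show (p - 1) * p + p * (1 - p) = 0 by ring, ENNReal.rpow_zero, mul_one]
    have humeas : AEMeasurable u μ := ((hh.mul (hfg.pow_const _)).pow_const _)
    have hvmeas : AEMeasurable v μ := ((hfg.pow_const _).pow_const _)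
    calc ∫⁻ x, h x ^ p ∂μ = ∫⁻ x, u x * v x ∂μ := lintegral_congr_ae hueq
      _ ≤ (∫⁻ x, u x ^ (1 / p) ∂μ) ^ (1 / (1 / p)) *
          (∫⁻ x, v x ^ (1 / (1 - p)) ∂μ) ^ (1 / (1 / (1 - p))) :=
        ENNReal.lintegral_mul_le_Lp_mul_Lq μ hconj humeas hvmeas
      _ = (∫⁻ x, h x * (f x + g x) ^ (p - 1) ∂μ) ^ p * T ^ (1 - p) := by
        rw [one_div_one_div, one_div_one_div]
        congr 1
        · congr 1
          apply lintegral_congr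
          intro x
          rw [hu, ← ENNReal.rpow_mul, mul_one_div_cancel hp0.ne', ENNReal.rpow_one]
        · congr 1
          apply lintegral_congr
          intro x
          rw [hv, ← ENNReal.rpow_mul, mul_one_div_cancel (by linarith : (1:ℝ) - p ≠ 0),
            ENNReal.rpow_one]
  have hFf : AEMeasurable (fun x => f x * (f x + g x) ^ (p - 1)) μ :=
    hf.mul (hfg.pow_const _)
  have hFg : AEMeasurable (fun x => g x * (f x + g x) ^ (p - 1)) μ :=
    hg.mul (hfg.pow_const _)
  have hsum : (∫⁻ x, f x * (f x + g x) ^ (p - 1) ∂μ) +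
      (∫⁻ x, g x * (f x + g x) ^ (p - 1) ∂μ) = T := by
    rw [← lintegral_add_left' hFf]
    apply lintegral_congr_ae
    filter_upwards [hfin] with x hx
    rcases eq_or_ne (f x + g x) 0 with h0 | h0
    · have hfx : f x = 0 := le_antisymm (le_trans le_self_add (le_of_eq h0)) zero_le
      have hgx : g x = 0 := le_antisymm (le_trans le_add_self (le_of_eq h0)) zero_le
      simp [hfx, hgx, ENNReal.zero_rpow_of_pos hp0]
    · rw [← add_mul, ← ENNReal.rpow_one (f x + g x), ← ENNReal.rpow_mul,
        ← ENNReal.rpow_add _ _ h0 hx]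
      norm_num
  have step : ∀ h : α → ℝ≥0∞, AEMeasurable h μ → (∀ x, h x ≤ f x + g x) →
      (∫⁻ x, h x ^ p ∂μ) ^ (1 / p) ≤
        (∫⁻ x, h x * (f x + g x) ^ (p - 1) ∂μ) * T ^ ((1 - p) / p) := by
    intro h hh hle
    have := ENNReal.rpow_le_rpow (key h hh hle) (by positivity : (0:ℝ) ≤ 1 / p)
    refine le_trans this (le_of_eq ?_)
    rw [ENNReal.mul_rpow_of_nonneg _ _ (by positivity), ← ENNReal.rpow_mul,
      ← ENNReal.rpow_mul, mul_one_div_cancel hp0.ne', ENNReal.rpow_one,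
      mul_one_div]
  calc (∫⁻ x, f x ^ p ∂μ) ^ (1 / p) + (∫⁻ x, g x ^ p ∂μ) ^ (1 / p)
      ≤ (∫⁻ x, f x * (f x + g x) ^ (p - 1) ∂μ) * T ^ ((1 - p) / p) +
        (∫⁻ x, g x * (f x + g x) ^ (p - 1) ∂μ) * T ^ ((1 - p) / p) :=
      add_le_add (step f hf fun x => le_self_add) (step g hg fun x => le_add_self)
    _ = T * T ^ ((1 - p) / p) := by rw [← add_mul, hsum]
    _ = T ^ (1 / p) := by
      have h1 : T * T ^ ((1 - p) / p) = T ^ (1 + (1 - p) / p) := by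
        rw [ENNReal.rpow_add _ _ hT0 hTtop, ENNReal.rpow_one]
      rw [h1]
      congr 1
      field_simp
      ring

end Mixed

section MixedLemmas

lemma measurable_cons_left {n : ℕ} (y : Fin n → ℝ) :
    Measurable fun t : ℝ => (Fin.cons t y : Fin (n+1) → ℝ) := by
  apply measurable_pi_lambda
  intro i
  refine Fin.cases ?_ ?_ i
  · simpa using (measurable_id' : Measurable fun c : ℝ => c)
  · intro j; simpa using measurable_const

lemma mixedNormF_mono : ∀ {n : ℕ} (p : Fin n → ℝ≥0∞) {f g : (Fin n → ℝ) → ℝ≥0∞},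
    (∀ x, f x ≤ g x) → mixedNormF p f ≤ mixedNormF p g := by
  intro n
  induction n with
  | zero => intro p f g h; exact h _
  | succ n ih =>
    intro p f g h
    simp only [mixedNormF]
    apply ih
    intro y
    split_ifs with hp
    · exact essSup_mono_ae (Eventually.of_forall fun t => h _)
    · exact ENNReal.rpow_le_rpow
        (lintegral_mono fun t => ENNReal.rpow_le_rpow (h _) ENNReal.toReal_nonneg)
        (by positivity)

lemma measurable_mixed_inner {n : ℕ} (pr : ℝ) {f : (Fin (n+1) → ℝ) → ℝ≥0∞}
    (hf : Measurable f) :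
    Measurable fun y : Fin n → ℝ => (∫⁻ t, f (Fin.cons t y) ^ pr) ^ (1 / pr) := by
  have hc : Measurable fun q : (Fin n → ℝ) × ℝ => f (Fin.cons q.2 q.1) := by
    apply hf.comp
    apply measurable_pi_lambda
    intro i
    refine Fin.cases ?_ ?_ i
    · simpa using measurable_snd
    · intro j; exact (measurable_pi_apply j).comp measurable_fst
  exact ((hc.pow_const pr).lintegral_prod_right').pow_const _

lemma mixedNormF_const_mul : ∀ {n : ℕ} (p : Fin n → ℝ≥0∞), (∀ i, p i ≠ 0) →
    (∀ i, p i ≠ ∞) → ∀ {c : ℝ≥0∞}, c ≠ ∞ → ∀ (f : (Fin n → ℝ) → ℝ≥0∞),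
    mixedNormF p (fun x => c * f x) = c * mixedNormF p f := by
  intro n
  induction n with
  | zero => intro p _ _ c _ f; rfl
  | succ n ih =>
    intro p hp0 hptop c hc f
    have hpr : 0 < (p 0).toReal := ENNReal.toReal_pos (hp0 0) (hptop 0)
    simp only [mixedNormF, if_neg (hptop 0)]
    have key : ∀ y : Fin n → ℝ,
        (∫⁻ t, (c * f (Fin.cons t y)) ^ (p 0).toReal) ^ (1 / (p 0).toReal) =
        c * (∫⁻ t, f (Fin.cons t y) ^ (p 0).toReal) ^ (1 / (p 0).toReal) := by
      intro y
      simp_rw [ENNReal.mul_rpow_of_nonneg _ _ hpr.le]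
      rw [lintegral_const_mul' _ _ (ENNReal.rpow_ne_top_of_nonneg hpr.le hc),
        ENNReal.mul_rpow_of_nonneg _ _ (by positivity), ← ENNReal.rpow_mul,
        mul_one_div_cancel hpr.ne', ENNReal.rpow_one]
    calc mixedNormF (fun i => p i.succ)
          (fun y => (∫⁻ t, (c * f (Fin.cons t y)) ^ (p 0).toReal) ^ (1 / (p 0).toReal))
        = mixedNormF (fun i => p i.succ)
          (fun y => c * (∫⁻ t, f (Fin.cons t y) ^ (p 0).toReal) ^ (1 / (p 0).toReal)) := by
          congr 1; funext y; exact key y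
      _ = c * _ := ih _ (fun i => hp0 i.succ) (fun i => hptop i.succ) hc _

lemma mixedNormF_superadd : ∀ {n : ℕ} (p : Fin n → ℝ≥0∞), (∀ i, p i ≠ 0) →
    (∀ i, p i ≤ 1) → ∀ {f g : (Fin n → ℝ) → ℝ≥0∞}, Measurable f → Measurable g →
    mixedNormF p f + mixedNormF p g ≤ mixedNormF p (fun x => f x + g x) := by
  intro n
  induction n with
  | zero => intro p _ _ f g _ _; exact le_of_eq rfl
  | succ n ih =>
    intro p hp0 hp1 f g hf hg
    have hptop : ∀ i, p i ≠ ∞ := by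
      intro i h
      have := hp1 i
      rw [h] at this
      simp at this
    have hpr : 0 < (p 0).toReal := ENNReal.toReal_pos (hp0 0) (hptop 0)
    have hpr1 : (p 0).toReal ≤ 1 := by
      have := ENNReal.toReal_mono (by simp : (1:ℝ≥0∞) ≠ ∞) (hp1 0)
      simpa using this
    simp only [mixedNormF, if_neg (hptop 0)]
    refine le_trans (ih _ (fun i => hp0 i.succ) (fun i => hp1 i.succ)
      (measurable_mixed_inner _ hf) (measurable_mixed_inner _ hg)) ?_
    apply mixedNormF_mono
    intro y
    exact rev_minkowski volume hpr hpr1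
      (hf.comp (measurable_cons_left y)).aemeasurable
      (hg.comp (measurable_cons_left y)).aemeasurable

lemma mixedNormF_sum {n : ℕ} (p : Fin n → ℝ≥0∞) (hp0 : ∀ i, p i ≠ 0)
    (hp1 : ∀ i, p i ≤ 1) {m : ℕ} (F : Fin m → (Fin n → ℝ) → ℝ≥0∞)
    (hF : ∀ i, Measurable (F i)) (s : Finset (Fin m)) :
    ∑ i ∈ s, mixedNormF p (F i) ≤ mixedNormF p (fun x => ∑ i ∈ s, F i x) := by
  classical
  induction s using Finset.induction with
  | empty => simp
  | @insert j s' hj ih =>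
    rw [Finset.sum_insert hj]
    refine le_trans (add_le_add le_rfl ih) ?_
    refine le_trans (mixedNormF_superadd p hp0 hp1 (hF j)
      (by exact Finset.measurable_sum s' fun i _ => hF i)) ?_
    apply mixedNormF_mono
    intro x
    rw [Finset.sum_insert hj]

lemma mixedNormF_box : ∀ {n : ℕ} (p : Fin n → ℝ≥0∞), (∀ i, p i ≠ 0) →
    (∀ i, p i ≠ ∞) → ∀ (c d : Fin n → ℝ),
    mixedNormF p ((Set.univ.pi fun i => Set.Ioo (c i) (d i)).indicator fun _ => (1:ℝ≥0∞)) =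
      ∏ i, (volume (Set.Ioo (c i) (d i))) ^ (1 / (p i).toReal) := by
  intro n
  induction n with
  | zero =>
    intro p _ _ c d
    have : (fun i : Fin 0 => i.elim0) ∈ Set.univ.pi fun i => Set.Ioo (c i) (d i) := by
      intro i _; exact i.elim0
    simp [mixedNormF, Set.indicator_of_mem this]
  | succ n ih =>
    intro p hp0 hptop c d
    have hpr : 0 < (p 0).toReal := ENNReal.toReal_pos (hp0 0) (hptop 0)
    set I0 := Set.Ioo (c 0) (d 0) with hI0
    set TB := Set.univ.pi fun j : Fin n => Set.Ioo (c j.succ) (d j.succ) with hTB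
    have key : ∀ y : Fin n → ℝ,
        (∫⁻ t, ((Set.univ.pi fun i => Set.Ioo (c i) (d i)).indicator
            (fun _ => (1:ℝ≥0∞)) (Fin.cons t y)) ^ (p 0).toReal) ^ (1 / (p 0).toReal) =
        (volume I0) ^ (1 / (p 0).toReal) * TB.indicator (fun _ => (1:ℝ≥0∞)) y := by
      intro y
      by_cases hy : y ∈ TB
      · have h1 : ∀ t : ℝ, (Set.univ.pi fun i => Set.Ioo (c i) (d i)).indicator
            (fun _ => (1:ℝ≥0∞)) (Fin.cons t y) = I0.indicator (fun _ => (1:ℝ≥0∞)) t := by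
          intro t
          by_cases ht : t ∈ I0
          · rw [Set.indicator_of_mem ht, Set.indicator_of_mem]
            intro i _
            refine Fin.cases ?_ ?_ i
            · simpa [hI0] using ht
            · intro j; simpa using hy j (Set.mem_univ j)
          · rw [Set.indicator_of_notMem ht, Set.indicator_of_notMem]
            intro hc'
            exact ht (by simpa [hI0] using hc' 0 (Set.mem_univ 0))
        simp_rw [h1]
        have h2 : ∀ t : ℝ, (I0.indicator (fun _ => (1:ℝ≥0∞)) t) ^ (p 0).toReal =
            I0.indicator (fun _ => (1:ℝ≥0∞)) t := by
          intro t
          by_cases ht : t ∈ I0 <;>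
            simp [ht, ENNReal.zero_rpow_of_pos hpr]
        simp_rw [h2]
        have h3 : (∫⁻ t, I0.indicator (fun _ => (1:ℝ≥0∞)) t) = volume I0 :=
          lintegral_indicator_one measurableSet_Ioo
        rw [h3, Set.indicator_of_mem hy, mul_one]
      · have h1 : ∀ t : ℝ, (Set.univ.pi fun i => Set.Ioo (c i) (d i)).indicator
            (fun _ => (1:ℝ≥0∞)) (Fin.cons t y) = 0 := by
          intro t
          rw [Set.indicator_of_notMem]
          intro hc'
          exact hy fun j _ => by simpa using hc' j.succ (Set.mem_univ _)
        simp_rw [h1]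
        rw [Set.indicator_of_notMem hy, mul_zero]
        simp only [ENNReal.zero_rpow_of_pos hpr, lintegral_zero,
          ENNReal.zero_rpow_of_pos (one_div_pos.mpr hpr)]
    simp only [mixedNormF, if_neg (hptop 0)]
    calc mixedNormF (fun i => p i.succ) _
        = mixedNormF (fun i => p i.succ)
            (fun y => (volume I0) ^ (1 / (p 0).toReal) * TB.indicator (fun _ => (1:ℝ≥0∞)) y) := by
          congr 1; funext y; exact key y
      _ = (volume I0) ^ (1 / (p 0).toReal) *
            mixedNormF (fun i => p i.succ) (TB.indicator fun _ => (1:ℝ≥0∞)) := by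
          apply mixedNormF_const_mul _ (fun i => hp0 i.succ) (fun i => hptop i.succ)
          exact ENNReal.rpow_ne_top_of_nonneg (by positivity) (by simp [hI0])
      _ = ∏ i, (volume (Set.Ioo (c i) (d i))) ^ (1 / (p i).toReal) := by
          rw [ih _ (fun i => hp0 i.succ) (fun i => hptop i.succ), Fin.prod_univ_succ]

end MixedLemmas


section Chunk3

lemma ennreal_sum_le_rpow {ι : Type*} {θ : ℝ} (hθ0 : 0 < θ) (hθ1 : θ ≤ 1)
    (s : Finset ι) (b : ι → ℝ≥0∞) :
    ∑ i ∈ s, b i ≤ (∑ i ∈ s, b i ^ θ) ^ (1 / θ) := by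
  classical
  induction s using Finset.induction with
  | empty => simp
  | @insert j s' hj ih =>
    rw [Finset.sum_insert hj, Finset.sum_insert hj]
    refine le_trans (add_le_add le_rfl ih) ?_
    have h2 := ENNReal.rpow_add_rpow_le (b j) ((∑ i ∈ s', b i ^ θ) ^ (1 / θ)) hθ0 hθ1
    simp only [ENNReal.rpow_one, one_div_one] at h2
    refine le_trans h2 (le_of_eq ?_)
    congr 2
    rw [← ENNReal.rpow_mul, one_div_mul_cancel hθ0.ne', ENNReal.rpow_one]

section BallFacts

variable {n : ℕ} {a : Fin n → ℝ} {x : Fin n → ℝ} {r : ℝ}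

lemma aball_subset_box (ha : ∀ i, 1 ≤ a i) (hr : 0 < r) :
    aball a x r ⊆ Set.univ.pi fun i => Set.Ioo (x i - r ^ a i) (x i + r ^ a i) := by
  rw [aball_eq ha x hr]
  intro y hy
  intro i _
  have hterm : (y i - x i) ^ 2 / r ^ (2 * a i) < 1 := by
    refine lt_of_le_of_lt ?_ hy
    apply Finset.single_le_sum (f := fun i => (y i - x i) ^ 2 / r ^ (2 * a i))
      (fun j _ => by positivity) (Finset.mem_univ i)
  have hrp : (0:ℝ) < r ^ a i := Real.rpow_pos_of_pos hr _
  have hsq : r ^ (2 * a i) = (r ^ a i) ^ 2 := by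
    rw [two_mul, Real.rpow_add hr, sq]
  rw [hsq, div_lt_one (by positivity)] at hterm
  have := abs_lt_of_sq_lt_sq' hterm hrp.le
  constructor
  · linarith [this.1]
  · linarith [this.2]

lemma box_subset_aball (hn : 0 < n) (ha : ∀ i, 1 ≤ a i) (hr : 0 < r) :
    (Set.univ.pi fun i => Set.Ioo (x i - r ^ a i / n) (x i + r ^ a i / n)) ⊆
      aball a x r := by
  rw [aball_eq ha x hr]
  intro y hy
  have hn' : (0:ℝ) < n := by exact_mod_cast hn
  have key : ∀ i, (y i - x i) ^ 2 / r ^ (2 * a i) < 1 / (n:ℝ) ^ 2 := by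
    intro i
    have hyi := hy i (Set.mem_univ i)
    have hrp : (0:ℝ) < r ^ a i := Real.rpow_pos_of_pos hr _
    have habs : |y i - x i| < r ^ a i / n := by
      rw [abs_lt]
      constructor
      · linarith [hyi.1]
      · linarith [hyi.2]
    have hsq : (y i - x i) ^ 2 < (r ^ a i / n) ^ 2 := by
      rw [← sq_abs]
      apply sq_lt_sq' (by linarith [abs_nonneg (y i - x i)]) habs
    have hsq2 : r ^ (2 * a i) = (r ^ a i) ^ 2 := by
      rw [two_mul, Real.rpow_add hr, sq]
    rw [hsq2, div_lt_iff₀ (by positivity : (0:ℝ) < (r ^ a i) ^ 2)]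
    have heq : (r ^ a i / (n:ℝ)) ^ 2 = 1 / (n:ℝ) ^ 2 * (r ^ a i) ^ 2 := by
      rw [div_pow]; ring
    rw [heq] at hsq
    exact hsq
  calc ∑ i, (y i - x i) ^ 2 / r ^ (2 * a i) < ∑ _i : Fin n, 1 / (n:ℝ) ^ 2 :=
        Finset.sum_lt_sum_of_nonempty
          (by haveI : Nonempty (Fin n) := Fin.pos_iff_nonempty.mp hn
              exact Finset.univ_nonempty)
          (fun i _ => key i)
    _ = n * (1 / (n:ℝ) ^ 2) := by
        rw [Finset.sum_const, Finset.card_univ, Fintype.card_fin, nsmul_eq_mul]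
    _ = 1 / n := by field_simp
    _ ≤ 1 := by rw [div_le_one hn']; exact_mod_cast hn

lemma measurableSet_aball (ha : ∀ i, 1 ≤ a i) (hr : 0 < r) :
    MeasurableSet (aball a x r) := by
  rw [aball_eq ha x hr]
  apply measurableSet_lt _ measurable_const
  apply Finset.measurable_sum
  intro i _
  exact (((measurable_pi_apply i).sub measurable_const).pow_const 2).div_const _

lemma volume_aball_pos (hn : 0 < n) (ha : ∀ i, 1 ≤ a i) (hr : 0 < r) :
    0 < volume (aball a x r) := by
  refine lt_of_lt_of_le ?_ (measure_mono (box_subset_aball hn ha hr))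
  rw [volume_pi_pi]
  rw [CanonicallyOrderedAdd.prod_pos]
  intro i _
  rw [Real.volume_Ioo]
  apply ENNReal.ofReal_pos.mpr
  have : (0:ℝ) < r ^ a i / n := by
    apply div_pos (Real.rpow_pos_of_pos hr _) (by exact_mod_cast hn)
  linarith

lemma volume_aball_lt_top (ha : ∀ i, 1 ≤ a i) (hr : 0 < r) :
    volume (aball a x r) < ∞ := by
  refine lt_of_le_of_lt (measure_mono (aball_subset_box ha hr)) ?_
  rw [volume_pi_pi]
  exact ENNReal.prod_lt_top fun i _ => by rw [Real.volume_Ioo]; exact ENNReal.ofReal_lt_top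

lemma indicator_one_mono {α : Type*} {S T : Set α} (h : S ⊆ T) :
    ∀ z, S.indicator (fun _ => (1:ℝ≥0∞)) z ≤ T.indicator (fun _ => (1:ℝ≥0∞)) z := by
  intro z
  by_cases hz : z ∈ S
  · rw [Set.indicator_of_mem hz, Set.indicator_of_mem (h hz)]
  · rw [Set.indicator_of_notMem hz]; exact zero_le

lemma chiNorm_aball_pos {p : Fin n → ℝ≥0∞} (hn : 0 < n) (ha : ∀ i, 1 ≤ a i)
    (hp0 : ∀ i, p i ≠ 0) (hptop : ∀ i, p i ≠ ∞) (hr : 0 < r) :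
    0 < chiNorm p (aball a x r) := by
  have h := mixedNormF_mono p (indicator_one_mono (box_subset_aball (x := x) hn ha hr))
  rw [mixedNormF_box p hp0 hptop] at h
  refine lt_of_lt_of_le ?_ h
  rw [CanonicallyOrderedAdd.prod_pos]
  intro i _
  apply ENNReal.rpow_pos
  · rw [Real.volume_Ioo]
    apply ENNReal.ofReal_pos.mpr
    have : (0:ℝ) < r ^ a i / n := by
      apply div_pos (Real.rpow_pos_of_pos hr _) (by exact_mod_cast hn)
    linarith
  · rw [Real.volume_Ioo]; exact ENNReal.ofReal_ne_top

lemma chiNorm_aball_lt_top {p : Fin n → ℝ≥0∞} (ha : ∀ i, 1 ≤ a i)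
    (hp0 : ∀ i, p i ≠ 0) (hptop : ∀ i, p i ≠ ∞) (hr : 0 < r) :
    chiNorm p (aball a x r) < ∞ := by
  have h := mixedNormF_mono p (indicator_one_mono (aball_subset_box (x := x) ha hr))
  rw [mixedNormF_box p hp0 hptop] at h
  refine lt_of_le_of_lt h ?_
  apply ENNReal.prod_lt_top
  intro i _
  apply ENNReal.rpow_lt_top_of_nonneg (by positivity)
  rw [Real.volume_Ioo]; exact ENNReal.ofReal_ne_top

end BallFacts

lemma pMinE_eq {n : ℕ} (hn : 0 < n) (p : Fin n → ℝ≥0∞) : ∃ j, pMinE p = p j := by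
  obtain ⟨j, -, hj⟩ := Finset.exists_min_image Finset.univ p ⟨⟨0, hn⟩, Finset.mem_univ _⟩
  exact ⟨j, le_antisymm (iInf_le _ j) (le_iInf fun i => hj i (Finset.mem_univ i))⟩

lemma sum_nnnorm_le_atomFinNorm {n m : ℕ} (hn : 0 < n) (p : Fin n → ℝ≥0∞)
    (hp0 : ∀ i, 0 < p i) (hp1 : ∀ i, p i ≤ 1) (lam : Fin m → ℂ)
    (B : Fin m → Set (Fin n → ℝ)) (hmeas : ∀ i, MeasurableSet (B i))
    (hc0 : ∀ i, chiNorm p (B i) ≠ 0) (hctop : ∀ i, chiNorm p (B i) ≠ ∞) :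
    ∑ i, (‖lam i‖₊ : ℝ≥0∞) ≤ atomFinNorm p lam B := by
  have hpne0 : ∀ i, p i ≠ 0 := fun i => (hp0 i).ne'
  have hpnetop : ∀ i, p i ≠ ∞ := fun i h => by
    have := hp1 i; rw [h] at this; simp at this
  obtain ⟨j, hj⟩ := pMinE_eq hn p
  have hθ0 : 0 < (pMinE p).toReal := by
    rw [hj]; exact ENNReal.toReal_pos (hpne0 j) (hpnetop j)
  have hθ1 : (pMinE p).toReal ≤ 1 := by
    rw [hj]
    have := ENNReal.toReal_mono (by simp : (1:ℝ≥0∞) ≠ ∞) (hp1 j)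
    simpa using this
  set θ := (pMinE p).toReal with hθ
  set F : Fin m → (Fin n → ℝ) → ℝ≥0∞ := fun i x =>
    (‖lam i‖₊ : ℝ≥0∞) * (B i).indicator (fun _ => 1) x / chiNorm p (B i) with hF
  have hFmeas : ∀ i, Measurable (F i) := by
    intro i
    exact ((measurable_const.indicator (hmeas i)).const_mul _).div_const _
  have step1 : mixedNormF p (fun x => ∑ i, F i x) ≤ atomFinNorm p lam B := by
    apply mixedNormF_mono
    intro z
    exact ennreal_sum_le_rpow hθ0 hθ1 Finset.univ fun i => F i z
  have step2 := mixedNormF_sum p hpne0 hp1 F hFmeas Finset.univ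
  have step3 : ∀ i, mixedNormF p (F i) = (‖lam i‖₊ : ℝ≥0∞) := by
    intro i
    have hrw : F i = fun x =>
        ((‖lam i‖₊ : ℝ≥0∞) / chiNorm p (B i)) * (B i).indicator (fun _ => 1) x := by
      funext z
      rw [hF]
      simp only
      rw [div_eq_mul_inv, div_eq_mul_inv, mul_right_comm]
    rw [hrw, mixedNormF_const_mul p hpne0 hpnetop
      (ne_of_lt (ENNReal.div_lt_top ENNReal.coe_ne_top (hc0 i))) _]
    have : mixedNormF p ((B i).indicator fun _ => (1:ℝ≥0∞)) = chiNorm p (B i) := rfl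
    rw [this, ENNReal.div_mul_cancel (hc0 i) (hctop i)]
  calc ∑ i, (‖lam i‖₊ : ℝ≥0∞) = ∑ i, mixedNormF p (F i) := by
        apply Finset.sum_congr rfl; intro i _; rw [step3 i]
    _ ≤ mixedNormF p (fun x => ∑ i, F i x) := step2
    _ ≤ atomFinNorm p lam B := step1

end Chunk3


section Chunk4

lemma isPolyDeg_continuous {n s : ℕ} {P : (Fin n → ℝ) → ℂ} (hP : IsPolyDeg s P) :
    Continuous P := by
  obtain ⟨Q, -, hQ⟩ := hP
  have : P = fun x => MvPolynomial.eval (fun i => (x i : ℂ)) Q := funext hQ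
  rw [this]
  simp_rw [MvPolynomial.eval_eq']
  apply continuous_finset_sum
  intro d _
  apply Continuous.mul continuous_const
  apply continuous_finset_prod
  intro i _
  exact (Complex.continuous_ofReal.comp (continuous_apply i)).pow _

lemma integrable_of_zero_off {n : ℕ} {K : Set (Fin n → ℝ)} (hK : MeasurableSet K)
    {f : (Fin n → ℝ) → ℂ} (hint : IntegrableOn f K volume)
    (hz : ∀ x ∉ K, f x = 0) : Integrable f volume := by
  have : f = K.indicator f := by
    funext x
    exact (Set.indicator_apply_eq_self.mpr fun hx => hz x hx).symm
  rw [this]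
  exact (integrable_indicator_iff hK).mpr hint

/-- main per-atom estimate -/
lemma atom_estimate {n : ℕ} (hn : 0 < n) (a : Fin n → ℝ) (ha : ∀ i, 1 ≤ a i)
    (p : Fin n → ℝ≥0∞) (hp0 : ∀ i, 0 < p i) (hp1 : ∀ i, p i ≤ 1)
    (r r' : ℝ≥0∞) (hr : 1 < r) (hrr' : 1 / r + 1 / r' = 1) (s : ℕ)
    (g : (Fin n → ℝ) → ℂ) (hg : LocLp r' g)
    {A : (Fin n → ℝ) → ℂ} {B : Set (Fin n → ℝ)} (hA : IsAtomFn a p r s A B) :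
    Integrable (fun x => A x * g x) volume ∧
      (‖∫ x, A x * g x‖₊ : ℝ≥0∞) ≤ campanatoNorm a p r' s g := by
  classical
  have hpne0 : ∀ i, p i ≠ 0 := fun i => (hp0 i).ne'
  have hpnetop : ∀ i, p i ≠ ∞ := fun i h => by
    have := hp1 i; rw [h] at this; simp at this
  -- exponent bookkeeping
  have hrne0 : r ≠ 0 := (lt_trans zero_lt_one hr).ne'
  have h1rlt : 1 / r < 1 := by rw [one_div]; exact ENNReal.inv_lt_one.mpr hr
  have h1r'ne0 : 1 / r' ≠ 0 := by
    intro h; rw [h, add_zero] at hrr'; exact h1rlt.ne hrr'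
  have hr'netop : r' ≠ ∞ := by
    rw [one_div] at h1r'ne0
    exact fun h => h1r'ne0 (by rw [h]; simp)
  have hr'ne0 : r' ≠ 0 := by
    intro h; rw [h] at hrr'; simp at hrr'
  have h1r : 1 / r ≠ ∞ := by rw [one_div]; exact ENNReal.inv_ne_top.mpr hrne0
  have h1r' : 1 / r' ≠ ∞ := by rw [one_div]; exact ENNReal.inv_ne_top.mpr hr'ne0
  have hc12 : (1/r).toReal + 1/r'.toReal = 1 := by
    have := congrArg ENNReal.toReal hrr'
    rw [ENNReal.toReal_add h1r h1r', ENNReal.toReal_one] at this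
    rw [one_div r', ENNReal.toReal_inv] at this
    simp only [one_div] at this ⊢
    exact this
  -- ball data
  obtain ⟨xc, rc, hrc, hBeq⟩ := hA.ball_mem
  have hBmeas : MeasurableSet B := hBeq ▸ measurableSet_aball ha hrc
  have hV0 : volume B ≠ 0 := hBeq ▸ (volume_aball_pos hn ha hrc).ne'
  have hVtop : volume B ≠ ∞ := hBeq ▸ (volume_aball_lt_top ha hrc).ne
  have hC0 : chiNorm p B ≠ 0 := hBeq ▸ (chiNorm_aball_pos hn ha hpne0 hpnetop hrc).ne'
  have hCtop : chiNorm p B ≠ ∞ := hBeq ▸ (chiNorm_aball_lt_top ha hpne0 hpnetop hrc).ne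
  -- compact superset
  set K : Set (Fin n → ℝ) :=
    Set.univ.pi fun i => Set.Icc (xc i - rc ^ a i) (xc i + rc ^ a i) with hKdef
  have hK : IsCompact K := isCompact_univ_pi fun i => isCompact_Icc
  have hKmeas : MeasurableSet K := hK.measurableSet
  have hBK : B ⊆ K := by
    rw [hBeq]
    refine subset_trans (aball_subset_box ha hrc) ?_
    exact Set.pi_mono fun i _ => Set.Ioo_subset_Icc_self
  haveI : IsFiniteMeasure (volume.restrict K) :=
    ⟨by rw [Measure.restrict_apply_univ]; exact hK.measure_lt_top⟩
  have hAzero : ∀ x ∉ B, A x = 0 := fun x hx =>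
    Function.support_subset_iff'.mp hA.support_subset x hx
  have hAzeroK : ∀ x ∉ K, A x = 0 := fun x hx => hAzero x fun hB => hx (hBK hB)
  -- A ∈ L^r
  have hAr : MemLp A r volume := by
    refine ⟨hA.measurable.aestronglyMeasurable, lt_of_le_of_lt hA.size ?_⟩
    exact ENNReal.div_lt_top (ENNReal.rpow_ne_top_of_nonneg ENNReal.toReal_nonneg hVtop) hC0
  have hgK : MemLp g r' (volume.restrict K) := hg K hK
  -- A * g integrable
  have hintAgK : Integrable (fun x => A x * g x) (volume.restrict K) := by
    have hs : MemLp (A • g) 1 (volume.restrict K) :=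
      MemLp.smul hgK (hAr.restrict K) (hpqr := ⟨by simpa [one_div] using hrr'⟩)
    exact memLp_one_iff_integrable.mp hs
  have hintAg : Integrable (fun x => A x * g x) volume :=
    integrable_of_zero_off hKmeas hintAgK fun x hx => by rw [hAzeroK x hx, zero_mul]
  refine ⟨hintAg, ?_⟩
  -- A integrable
  have hintA : Integrable A volume := by
    apply integrable_of_zero_off hKmeas _ hAzeroK
    exact memLp_one_iff_integrable.mp ((hAr.restrict K).mono_exponent hr.le)
  -- monomials and polynomials against A
  have hmono : ∀ d : Fin n → ℕ,
      Integrable (fun x => A x * ∏ i, (x i : ℂ) ^ d i) volume := by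
    intro d
    have hcont : Continuous fun x : Fin n → ℝ => ∏ i, (x i : ℂ) ^ d i := by
      apply continuous_finset_prod
      intro i _
      exact (Complex.continuous_ofReal.comp (continuous_apply i)).pow _
    obtain ⟨M, hM⟩ := hK.exists_bound_of_continuousOn hcont.continuousOn
    refine Integrable.mono' (hintA.norm.const_mul (max M 0))
      (hA.measurable.aestronglyMeasurable.mul hcont.measurable.aestronglyMeasurable)
      (Eventually.of_forall fun x => ?_)
    rw [norm_mul]
    by_cases hx : x ∈ K
    · calc ‖A x‖ * ‖∏ i, (x i : ℂ) ^ d i‖ ≤ ‖A x‖ * max M 0 :=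
            mul_le_mul_of_nonneg_left (le_trans (hM x hx) (le_max_left _ _)) (norm_nonneg _)
        _ = max M 0 * ‖A x‖ := mul_comm _ _
    · rw [hAzeroK x hx]; simp [mul_nonneg (le_max_right M 0) (norm_nonneg _)]
  have hpoly : ∀ P : (Fin n → ℝ) → ℂ, IsPolyDeg s P →
      Integrable (fun x => A x * P x) volume ∧ (∫ x, A x * P x) = 0 := by
    intro P hP
    obtain ⟨Q, hdeg, hQ⟩ := hP
    have hexp : (fun x => A x * P x) = fun x =>
        ∑ d ∈ Q.support, MvPolynomial.coeff d Q * (A x * ∏ i, (x i : ℂ) ^ d i) := by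
      funext x
      rw [hQ x, MvPolynomial.eval_eq', Finset.mul_sum]
      apply Finset.sum_congr rfl
      intro d _
      ring
    constructor
    · rw [hexp]
      exact integrable_finset_sum _ fun d _ => (hmono d).const_mul _
    · have hisum := integral_finset_sum (μ := volume) Q.support
        (f := fun d x => MvPolynomial.coeff d Q * (A x * ∏ i, (x i : ℂ) ^ d i))
        (fun d _ => (hmono d).const_mul _)
      rw [hexp, hisum]
      apply Finset.sum_eq_zero
      intro d hd
      rw [integral_const_mul]
      have hds : (∑ i, d i) ≤ s := by
        have h1 := MvPolynomial.le_totalDegree hd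
        have h2 : d.sum (fun _ e => e) = ∑ i, d i := Finsupp.sum_fintype _ _ fun _ => rfl
        rw [h2] at h1
        exact le_trans h1 hdeg
      rw [hA.moments (fun i => d i) hds, mul_zero]
    -- end hpoly
  -- the inner estimate
  rw [campanatoNorm]
  refine le_trans ?_ (le_iSup₂ (f := fun (B' : Set (Fin n → ℝ)) (_ : B' ∈ aballs a) =>
    ⨅ P ∈ {P : (Fin n → ℝ) → ℂ | IsPolyDeg s P},
      volume B' / chiNorm p B' *
        (if r' = ∞ then essSup (fun x => (‖g x - P x‖₊ : ℝ≥0∞)) (volume.restrict B')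
         else ((volume B')⁻¹ * ∫⁻ x in B', (‖g x - P x‖₊ : ℝ≥0∞) ^ r'.toReal)
           ^ (1 / r'.toReal))) B ⟨xc, rc, hrc, hBeq⟩)
  refine le_iInf₂ ?_
  intro P hP
  rw [if_neg hr'netop]
  have hPcont : Continuous P := isPolyDeg_continuous hP
  obtain ⟨hintAP, hAP0⟩ := hpoly P hP
  have heq : ∫ x, A x * g x = ∫ x, A x * (g x - P x) := by
    have h1 : (fun x => A x * (g x - P x)) = fun x => A x * g x - A x * P x := by
      funext x; ring
    rw [h1, integral_sub hintAg hintAP, hAP0, sub_zero]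
  rw [heq]
  have hgPmeas : AEStronglyMeasurable (fun x => g x - P x) (volume.restrict B) := by
    have h1 : AEStronglyMeasurable g (volume.restrict B) :=
      hgK.1.mono_measure (Measure.restrict_mono hBK le_rfl)
    exact h1.sub hPcont.aestronglyMeasurable.restrict
  calc (‖∫ x, A x * (g x - P x)‖₊ : ℝ≥0∞)
      = (‖∫ x in B, A x * (g x - P x)‖₊ : ℝ≥0∞) := by
        rw [setIntegral_eq_integral_of_forall_compl_eq_zero
          fun x hx => by rw [hAzero x hx, zero_mul]]
    _ ≤ ∫⁻ x in B, ‖A x * (g x - P x)‖₊ := enorm_integral_le_lintegral_enorm _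
    _ = eLpNorm (fun x => A x * (g x - P x)) 1 (volume.restrict B) :=
        (eLpNorm_one_eq_lintegral_enorm (f := fun x => A x * (g x - P x))).symm
    _ ≤ eLpNorm A r (volume.restrict B) *
        eLpNorm (fun x => g x - P x) r' (volume.restrict B) := by
        refine le_trans (eLpNorm_le_eLpNorm_mul_eLpNorm'_of_norm (p := r) (q := r')
          (hA.measurable.aestronglyMeasurable.restrict) hgPmeas (· * ·) 1
          (Eventually.of_forall fun x => by simp [norm_mul]) (hpqr := ?_)) (le_of_eq (by simp))
        exact ⟨by simpa [one_div] using hrr'⟩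
    _ ≤ (volume B ^ (1/r).toReal / chiNorm p B) *
        eLpNorm (fun x => g x - P x) r' (volume.restrict B) := by
        apply mul_le_mul' _ le_rfl
        exact le_trans (eLpNorm_mono_measure A Measure.restrict_le_self) hA.size
    _ = (volume B ^ (1/r).toReal / chiNorm p B) *
        (∫⁻ x in B, (‖g x - P x‖₊ : ℝ≥0∞) ^ r'.toReal) ^ (1 / r'.toReal) := by
        rw [eLpNorm_eq_lintegral_rpow_enorm_toReal hr'ne0 hr'netop]; rfl
    _ = volume B / chiNorm p B *
        ((volume B)⁻¹ * ∫⁻ x in B, (‖g x - P x‖₊ : ℝ≥0∞) ^ r'.toReal) ^ (1 / r'.toReal) := by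
        set V := volume B
        set C := chiNorm p B
        set L := ∫⁻ x in B, (‖g x - P x‖₊ : ℝ≥0∞) ^ r'.toReal
        set c2 : ℝ := 1 / r'.toReal with hc2def
        have hc2 : 0 ≤ c2 := by positivity
        have hx0 : V ^ c2 ≠ 0 := fun h => by
          rcases ENNReal.rpow_eq_zero_iff.mp h with ⟨h1, _⟩ | ⟨h1, _⟩
          exacts [hV0 h1, hVtop h1]
        have hxt : V ^ c2 ≠ ∞ := ENNReal.rpow_ne_top_of_nonneg hc2 hVtop
        have hV1 : V ^ (1/r).toReal * V ^ c2 = V := by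
          rw [← ENNReal.rpow_add _ _ hV0 hVtop, hc12, ENNReal.rpow_one]
        rw [ENNReal.mul_rpow_of_nonneg _ _ hc2, ENNReal.inv_rpow,
          div_eq_mul_inv, div_eq_mul_inv]
        calc V ^ (1/r).toReal * C⁻¹ * L ^ c2
            = (V ^ (1/r).toReal * (V ^ c2 * (V ^ c2)⁻¹)) * C⁻¹ * L ^ c2 := by
              rw [ENNReal.mul_inv_cancel hx0 hxt, mul_one]
          _ = (V ^ (1/r).toReal * V ^ c2) * C⁻¹ * ((V ^ c2)⁻¹ * L ^ c2) := by ring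
          _ = V * C⁻¹ * ((V ^ c2)⁻¹ * L ^ c2) := by rw [hV1]

end Chunk4


theorem statement0 {n : ℕ} (hn : 0 < n) (a : Fin n → ℝ) (ha : ∀ i, 1 ≤ a i)
    (p : Fin n → ℝ≥0∞) (hp0 : ∀ i, 0 < p i) (hp1 : ∀ i, p i ≤ 1)
    (r r' : ℝ≥0∞) (hr : 1 < r) (hrr' : 1 / r + 1 / r' = 1) (s : ℕ)
    (hs : ⌊nuTotal a / aMin a * (1 / (pMinE p).toReal - 1)⌋ ≤ (s : ℤ))
    (g : (Fin n → ℝ) → ℂ) (hg : LocLp r' g) (hgC : campanatoNorm a p r' s g < ∞)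
    (m : ℕ) (lam : Fin m → ℂ) (A : Fin m → (Fin n → ℝ) → ℂ)
    (B : Fin m → Set (Fin n → ℝ)) (hA : ∀ i, IsAtomFn a p r s (A i) (B i)) :
    (‖∫ x, (∑ i, lam i * A i x) * g x‖₊ : ℝ≥0∞) ≤
      atomFinNorm p lam B * campanatoNorm a p r' s g := by
  classical
  have hpne0 : ∀ i, p i ≠ 0 := fun i => (hp0 i).ne'
  have hpnetop : ∀ i, p i ≠ ∞ := fun i h => by
    have := hp1 i; rw [h] at this; simp at this
  have hEst := fun i => atom_estimate hn a ha p hp0 hp1 r r' hr hrr' s g hg (hA i)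
  have hballs : ∀ i, MeasurableSet (B i) ∧ chiNorm p (B i) ≠ 0 ∧ chiNorm p (B i) ≠ ∞ := by
    intro i
    obtain ⟨xc, rc, hrc, hBeq⟩ := (hA i).ball_mem
    exact ⟨hBeq ▸ measurableSet_aball ha hrc,
      hBeq ▸ (chiNorm_aball_pos hn ha hpne0 hpnetop hrc).ne',
      hBeq ▸ (chiNorm_aball_lt_top ha hpne0 hpnetop hrc).ne⟩
  have hKey := sum_nnnorm_le_atomFinNorm hn p hp0 hp1 lam B (fun i => (hballs i).1)
    (fun i => (hballs i).2.1) (fun i => (hballs i).2.2)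
  have hrw : (fun x => (∑ i, lam i * A i x) * g x) =
      fun x => ∑ i, lam i * (A i x * g x) := by
    funext x
    rw [Finset.sum_mul]
    apply Finset.sum_congr rfl
    intro i _
    ring
  rw [hrw, integral_finset_sum _ (fun i _ => ((hEst i).1.const_mul (lam i)))]
  simp_rw [integral_const_mul]
  calc (‖∑ i, lam i * ∫ x, A i x * g x‖₊ : ℝ≥0∞)
      ≤ ∑ i, (‖lam i * ∫ x, A i x * g x‖₊ : ℝ≥0∞) := by
        refine le_trans (ENNReal.coe_le_coe.mpr (nnnorm_sum_le _ _)) (le_of_eq ?_)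
        rw [ENNReal.coe_finset_sum]
    _ = ∑ i, (‖lam i‖₊ : ℝ≥0∞) * (‖∫ x, A i x * g x‖₊ : ℝ≥0∞) := by
        apply Finset.sum_congr rfl
        intro i _
        rw [nnnorm_mul, ENNReal.coe_mul]
    _ ≤ ∑ i, (‖lam i‖₊ : ℝ≥0∞) * campanatoNorm a p r' s g :=
        Finset.sum_le_sum fun i _ => mul_le_mul_right (hEst i).2 _
    _ = (∑ i, (‖lam i‖₊ : ℝ≥0∞)) * campanatoNorm a p r' s g := by
        rw [Finset.sum_mul]
    _ ≤ atomFinNorm p lam B * campanatoNorm a p r' s g := mul_le_mul_left hKey _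
end
end

section
/- Let $\vec a=(a_1,\dots,a_n)\in[1,\infty)^n$, $\vec p\in(0,1]^n$, $r\in(1,\infty]$ with conjugate exponent $r'$, and $s\in\mathbb{Z}_+$ with $s\ge\lfloor\frac{\nu}{a_-}(\frac{1}{p_-}-1)\rfloor$, where $\nu:=a_1+\cdots+a_n$, $a_-:=\min_i a_i$, $p_-:=\min_i p_i$. If $a$ is a $(\vec p,r,s)$-atom supported on the anisotropic ball $B\in\mathfrak B$ and $g$ is a locally $r'$-integrable function with $\|g\|_{\mathcal L^{\vec a}_{\vec p,r',s}(\mathbb{R}^n)}<\infty$, then $ag$ is integrable and $\big|\int_{\mathbb{R}^n}a(x)g(x)\,dx\big|\le\|g\|_{\mathcal L^{\vec a}_{\vec p,r',s}(\mathbb{R}^n)}$. -/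
open MeasureTheory ENNReal Filter

noncomputable section

namespace AuxGeom

variable {n : ℕ}

def FF (a z : Fin n → ℝ) (t : ℝ) : ℝ := ∑ i, z i ^ 2 / t ^ (2 * a i)

lemma anorm_eq (a z : Fin n → ℝ) : anorm a z = sInf {t : ℝ | 0 < t ∧ FF a z t = 1} := rfl

lemma FF_continuousOn (a z : Fin n → ℝ) : ContinuousOn (FF a z) (Set.Ioi 0) := by
  apply continuousOn_finset_sum
  intro i _
  apply ContinuousOn.div continuousOn_const
  · exact fun t ht => (Real.continuousAt_rpow_const t _ (Or.inl (ne_of_gt ht))).continuousWithinAt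
  · exact fun t ht => (Real.rpow_pos_of_pos ht _).ne'

lemma rpow_sq (x e : ℝ) (hx : 0 ≤ x) : x ^ (2 * e) = (x ^ e) ^ 2 := by
  rw [mul_comm, Real.rpow_mul hx, ← Real.rpow_natCast (x ^ e) 2]
  norm_num

lemma exists_root (a z : Fin n → ℝ) (ha : ∀ i, 1 ≤ a i) (hz : z ≠ 0) {c : ℝ} (hc : 0 < c)
    (hFc : FF a z c ≤ 1) : ∃ t, 0 < t ∧ t ≤ c ∧ FF a z t = 1 := by
  obtain ⟨j, hj⟩ : ∃ j, z j ≠ 0 := by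
    by_contra h; push_neg at h; exact hz (funext h)
  have haj : 0 < a j := lt_of_lt_of_le one_pos (ha j)
  have hzj : 0 < |z j| := abs_pos.2 hj
  set t₁ := min c (|z j| ^ (a j)⁻¹) with ht₁def
  have ht₁pos : 0 < t₁ := lt_min hc (Real.rpow_pos_of_pos hzj _)
  have ht₁le : t₁ ≤ c := min_le_left _ _
  have hF₁ : 1 ≤ FF a z t₁ := by
    have h1 : t₁ ^ (2 * a j) ≤ z j ^ 2 := by
      calc t₁ ^ (2 * a j) ≤ (|z j| ^ (a j)⁻¹) ^ (2 * a j) :=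
            Real.rpow_le_rpow ht₁pos.le (min_le_right _ _) (by positivity)
        _ = |z j| ^ ((a j)⁻¹ * (2 * a j)) := (Real.rpow_mul hzj.le _ _).symm
        _ = |z j| ^ (2 : ℝ) := by rw [show (a j)⁻¹ * (2 * a j) = 2 by field_simp]
        _ = z j ^ 2 := by
            rw [show (2:ℝ) = ((2:ℕ):ℝ) by norm_num, Real.rpow_natCast, sq_abs]
    have hterm : 1 ≤ z j ^ 2 / t₁ ^ (2 * a j) :=
      (one_le_div (Real.rpow_pos_of_pos ht₁pos _)).2 h1
    refine le_trans hterm ?_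
    show z j ^ 2 / t₁ ^ (2 * a j) ≤ ∑ i, z i ^ 2 / t₁ ^ (2 * a i)
    exact Finset.single_le_sum (f := fun i => z i ^ 2 / t₁ ^ (2 * a i)) (fun i _ => div_nonneg (sq_nonneg _)
      (Real.rpow_pos_of_pos ht₁pos _).le) (Finset.mem_univ j)
  have hsub : Set.Icc t₁ c ⊆ Set.Ioi 0 := fun t ht => lt_of_lt_of_le ht₁pos ht.1
  have := intermediate_value_Icc' ht₁le ((FF_continuousOn a z).mono hsub)
  obtain ⟨t, ht, hFt⟩ := this ⟨hFc, hF₁⟩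
  exact ⟨t, lt_of_lt_of_le ht₁pos ht.1, ht.2, hFt⟩

lemma FF_big (a z : Fin n → ℝ) (ha : ∀ i, 1 ≤ a i) :
    FF a z (max 1 (∑ i, z i ^ 2)) ≤ 1 := by
  set c := max 1 (∑ i, z i ^ 2) with hcdef
  have hc1 : 1 ≤ c := le_max_left _ _
  have hc0 : 0 < c := lt_of_lt_of_le one_pos hc1
  have hterm : ∀ i, z i ^ 2 / c ^ (2 * a i) ≤ z i ^ 2 / c ^ 2 := by
    intro i
    apply div_le_div_of_nonneg_left (sq_nonneg _) (by positivity)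
    calc (c:ℝ) ^ 2 = c ^ ((2:ℕ):ℝ) := (Real.rpow_natCast c 2).symm
      _ ≤ c ^ (2 * a i) := Real.rpow_le_rpow_of_exponent_le hc1 (by push_cast; nlinarith [ha i])
  calc FF a z c ≤ ∑ i, z i ^ 2 / c ^ 2 := Finset.sum_le_sum fun i _ => hterm i
    _ = (∑ i, z i ^ 2) / c ^ 2 := by rw [Finset.sum_div]
    _ ≤ c / c ^ 2 := (div_le_div_iff_of_pos_right (by positivity)).2 (le_max_right _ _)
    _ ≤ 1 := by
        rw [pow_two, div_mul_eq_div_div, div_self hc0.ne']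
        exact (div_le_one hc0).2 hc1

lemma mem_aball_iff (a x₀ : Fin n → ℝ) (R : ℝ) (y : Fin n → ℝ) :
    y ∈ aball a x₀ R ↔ anorm a (y - x₀) < R := Iff.rfl

lemma sub_apply' (y x₀ : Fin n → ℝ) (i : Fin n) : (y - x₀) i = y i - x₀ i := rfl

lemma aball_subset_box (a : Fin n → ℝ) (ha : ∀ i, 1 ≤ a i) (x₀ : Fin n → ℝ) (R : ℝ) :
    aball a x₀ R ⊆ {y | ∀ i, |y i - x₀ i| ≤ max 1 R ^ (a i)} := by
  intro y hy i
  set z : Fin n → ℝ := y - x₀ with hzdef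
  have hzi : y i - x₀ i = z i := rfl
  rw [hzi]
  have hm0 : (0:ℝ) < max 1 R := lt_of_lt_of_le one_pos (le_max_left _ _)
  by_cases hz : z = 0
  · rw [hz]
    simp only [Pi.zero_apply, abs_zero]
    positivity
  · have hy' : anorm a z < R := hy
    have hroot := exists_root a z ha hz (lt_of_lt_of_le one_pos (le_max_left 1 (∑ i, z i ^ 2)))
      (FF_big a z ha)
    obtain ⟨t₂, ht₂pos, _, ht₂F⟩ := hroot
    rw [anorm_eq] at hy'
    have hne : {t : ℝ | 0 < t ∧ FF a z t = 1}.Nonempty := ⟨t₂, ht₂pos, ht₂F⟩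
    obtain ⟨t, ⟨htpos, htF⟩, htR⟩ := exists_lt_of_csInf_lt hne hy'
    have hterm : z i ^ 2 / t ^ (2 * a i) ≤ 1 := by
      rw [← htF]
      show (fun i => z i ^ 2 / t ^ (2 * a i)) i ≤ FF a z t
      exact Finset.single_le_sum (f := fun i => z i ^ 2 / t ^ (2 * a i))
        (fun i _ => div_nonneg (sq_nonneg _) (Real.rpow_pos_of_pos htpos _).le)
        (Finset.mem_univ i)
    have h1 : z i ^ 2 ≤ t ^ (2 * a i) :=
      (div_le_one (Real.rpow_pos_of_pos htpos _)).1 hterm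
    have h2 : t ^ (2 * a i) ≤ max 1 R ^ (2 * a i) := by
      apply Real.rpow_le_rpow htpos.le (le_trans htR.le (le_max_right _ _))
      nlinarith [ha i]
    have h3 : z i ^ 2 ≤ (max 1 R ^ (a i)) ^ 2 := by
      rw [← rpow_sq _ _ hm0.le]; exact le_trans h1 h2
    calc |z i| = Real.sqrt (z i ^ 2) := (Real.sqrt_sq_eq_abs _).symm
      _ ≤ Real.sqrt ((max 1 R ^ (a i)) ^ 2) := Real.sqrt_le_sqrt h3
      _ = max 1 R ^ (a i) := Real.sqrt_sq (by positivity)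

lemma anorm_zero (a : Fin n → ℝ) : anorm a 0 = 0 := by
  rw [anorm_eq]
  convert Real.sInf_empty using 2
  ext t
  simp [FF]

lemma box_subset_aball (hn : 0 < n) (a : Fin n → ℝ) (ha : ∀ i, 1 ≤ a i) (x₀ : Fin n → ℝ)
    {R : ℝ} (hR : 0 < R) :
    ∃ ε > 0, ∀ y : Fin n → ℝ, (∀ i, |y i - x₀ i| < ε) → y ∈ aball a x₀ R := by
  haveI : Nonempty (Fin n) := ⟨⟨0, hn⟩⟩
  set c : ℝ := min R 1 / 2 with hcdef
  have hc0 : 0 < c := by positivity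
  have hcR : c < R := by
    have : min R 1 ≤ R := min_le_left _ _
    have h2 : c < min R 1 := half_lt_self (lt_min hR one_pos)
    linarith
  have hsn : (0:ℝ) < Real.sqrt n := Real.sqrt_pos.2 (by exact_mod_cast hn)
  set m : ℝ := Finset.univ.inf' Finset.univ_nonempty (fun i => c ^ (a i)) with hmdef
  have hm0 : 0 < m := by
    rw [hmdef, Finset.lt_inf'_iff]
    exact fun i _ => Real.rpow_pos_of_pos hc0 _
  refine ⟨m / Real.sqrt n, by positivity, fun y hy => ?_⟩
  set z : Fin n → ℝ := y - x₀ with hzdef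
  show anorm a z < R
  by_cases hz : z = 0
  · rw [hz, anorm_zero]; exact hR
  · have hFc : FF a z c ≤ 1 := by
      have hterm : ∀ i, z i ^ 2 / c ^ (2 * a i) ≤ 1 / n := by
        intro i
        have hzi : |z i| ≤ m / Real.sqrt n := (hy i).le
        have hsq : z i ^ 2 ≤ c ^ (2 * a i) / n := by
          have h1 : z i ^ 2 ≤ (m / Real.sqrt n) ^ 2 := by
            rw [← sq_abs]
            exact pow_le_pow_left₀ (abs_nonneg _) hzi 2
          have h2 : (m / Real.sqrt n) ^ 2 = m ^ 2 / n := by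
            rw [div_pow, Real.sq_sqrt (by positivity)]
          have h3 : m ≤ c ^ (a i) := Finset.inf'_le _ (Finset.mem_univ i)
          have h4 : m ^ 2 ≤ (c ^ (a i)) ^ 2 := pow_le_pow_left₀ hm0.le h3 2
          rw [rpow_sq _ _ hc0.le]
          calc z i ^ 2 ≤ m ^ 2 / n := by rw [← h2]; exact h1
            _ ≤ (c ^ (a i)) ^ 2 / n := by gcongr
        have hd : (0:ℝ) < c ^ (2 * a i) := Real.rpow_pos_of_pos hc0 _
        rw [div_le_div_iff₀ hd (by exact_mod_cast hn)]
        calc z i ^ 2 * n ≤ (c ^ (2 * a i) / n) * n := by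
              apply mul_le_mul_of_nonneg_right hsq (by positivity)
          _ = c ^ (2 * a i) := by field_simp
          _ = 1 * c ^ (2 * a i) := (one_mul _).symm
      calc FF a z c ≤ ∑ _i : Fin n, 1 / (n:ℝ) := Finset.sum_le_sum fun i _ => hterm i
        _ = 1 := by
            rw [Finset.sum_const, Finset.card_univ, Fintype.card_fin, nsmul_eq_mul]
            field_simp
    obtain ⟨t, htpos, htc, htF⟩ := exists_root a z ha hz hc0 hFc
    rw [anorm_eq]
    have hble : BddBelow {t : ℝ | 0 < t ∧ FF a z t = 1} := ⟨0, fun x hx => hx.1.le⟩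
    exact lt_of_le_of_lt (csInf_le hble ⟨htpos, htF⟩) (lt_of_le_of_lt htc hcR)

end AuxGeom

namespace AuxMix

lemma mixedNormF_succ {n : ℕ} (p : Fin (n+1) → ℝ≥0∞) (f : (Fin (n+1) → ℝ) → ℝ≥0∞) :
    mixedNormF p f = mixedNormF (fun i => p i.succ) fun y =>
      if p 0 = ∞ then essSup (fun t => f (Fin.cons t y)) volume
      else (∫⁻ t, f (Fin.cons t y) ^ (p 0).toReal) ^ (1 / (p 0).toReal) := rfl

lemma mixedNormF_mono {n : ℕ} (p : Fin n → ℝ≥0∞) (f g : (Fin n → ℝ) → ℝ≥0∞)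
    (h : ∀ x, f x ≤ g x) : mixedNormF p f ≤ mixedNormF p g := by
  induction n with
  | zero => exact h _
  | succ m ih =>
    rw [mixedNormF_succ, mixedNormF_succ]
    apply ih
    intro y
    by_cases hp : p 0 = ∞
    · simp only [hp, if_true]
      exact essSup_mono_ae (Filter.Eventually.of_forall fun t => h _)
    · simp only [hp, if_false]
      apply ENNReal.rpow_le_rpow _ (by positivity)
      exact lintegral_mono fun t => ENNReal.rpow_le_rpow (h _) ENNReal.toReal_nonneg

lemma mixedNormF_const_mul {n : ℕ} (p : Fin n → ℝ≥0∞) (hp : ∀ i, p i ≠ 0 ∧ p i ≠ ∞)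
    (f : (Fin n → ℝ) → ℝ≥0∞) (c : ℝ≥0∞) (hc : c ≠ ∞) :
    mixedNormF p (fun x => c * f x) = c * mixedNormF p f := by
  induction n with
  | zero => rfl
  | succ m ih =>
    rw [mixedNormF_succ, mixedNormF_succ]
    have hp0 : (p 0) ≠ ∞ := (hp 0).2
    have hp0t : 0 < (p 0).toReal := ENNReal.toReal_pos (hp 0).1 (hp 0).2
    have key : ∀ y, (if p 0 = ∞ then essSup (fun t => (fun x => c * f x) (Fin.cons t y)) volume
        else (∫⁻ t, (fun x => c * f x) (Fin.cons t y) ^ (p 0).toReal) ^ (1 / (p 0).toReal))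
        = c * (if p 0 = ∞ then essSup (fun t => f (Fin.cons t y)) volume
        else (∫⁻ t, f (Fin.cons t y) ^ (p 0).toReal) ^ (1 / (p 0).toReal)) := by
      intro y
      simp only [hp0, if_false]
      have h1 : ∀ t, (c * f (Fin.cons t y)) ^ (p 0).toReal
          = c ^ (p 0).toReal * f (Fin.cons t y) ^ (p 0).toReal := fun t =>
        ENNReal.mul_rpow_of_nonneg _ _ ENNReal.toReal_nonneg
      rw [show (∫⁻ t, (c * f (Fin.cons t y)) ^ (p 0).toReal)
          = c ^ (p 0).toReal * ∫⁻ t, f (Fin.cons t y) ^ (p 0).toReal by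
        simp_rw [h1]
        exact lintegral_const_mul' _ _ (ENNReal.rpow_ne_top_of_nonneg ENNReal.toReal_nonneg hc)]
      rw [ENNReal.mul_rpow_of_nonneg _ _ (by positivity)]
      congr 1
      rw [← ENNReal.rpow_mul, mul_one_div, div_self hp0t.ne', ENNReal.rpow_one]
    calc mixedNormF (fun i => p i.succ) _
        = mixedNormF (fun i => p i.succ) (fun y => c * (if p 0 = ∞ then
            essSup (fun t => f (Fin.cons t y)) volume
          else (∫⁻ t, f (Fin.cons t y) ^ (p 0).toReal) ^ (1 / (p 0).toReal))) := by
          congr 1; funext y; exact key y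
      _ = c * _ := ih (fun i => p i.succ) (fun i => hp i.succ) _

def boxSet {n : ℕ} (l u : Fin n → ℝ) : Set (Fin n → ℝ) := {x | ∀ i, x i ∈ Set.Ioo (l i) (u i)}

lemma mixedNormF_box {n : ℕ} (p : Fin n → ℝ≥0∞) (hp : ∀ i, p i ≠ 0 ∧ p i ≠ ∞)
    (l u : Fin n → ℝ) :
    mixedNormF p ((boxSet l u).indicator fun _ => (1:ℝ≥0∞))
      = ∏ i, (ENNReal.ofReal (u i - l i)) ^ (1 / (p i).toReal) := by
  induction n with
  | zero =>
    have : (fun i : Fin 0 => i.elim0) ∈ boxSet l u := fun i => i.elim0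
    simp [mixedNormF, Set.indicator_of_mem this]
  | succ m ih =>
    rw [mixedNormF_succ]
    have hp0 : (p 0) ≠ ∞ := (hp 0).2
    have hp0t : 0 < (p 0).toReal := ENNReal.toReal_pos (hp 0).1 (hp 0).2
    have hmem : ∀ (t : ℝ) (y : Fin m → ℝ),
        (Fin.cons t y ∈ boxSet l u) ↔
          (t ∈ Set.Ioo (l 0) (u 0) ∧ y ∈ boxSet (fun i => l i.succ) (fun i => u i.succ)) := by
      intro t y
      constructor
      · intro h
        exact ⟨by simpa using h 0, fun i => by simpa using h i.succ⟩
      · rintro ⟨h0, h1⟩ i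
        refine Fin.cases ?_ ?_ i
        · simpa using h0
        · intro j; simpa using h1 j
    have key : ∀ y : Fin m → ℝ,
        (if p 0 = ∞ then essSup (fun t => (boxSet l u).indicator (fun _ => (1:ℝ≥0∞)) (Fin.cons t y)) volume
        else (∫⁻ t, (boxSet l u).indicator (fun _ => (1:ℝ≥0∞)) (Fin.cons t y) ^ (p 0).toReal) ^ (1 / (p 0).toReal))
        = (ENNReal.ofReal (u 0 - l 0)) ^ (1 / (p 0).toReal) *
          (boxSet (fun i => l i.succ) (fun i => u i.succ)).indicator (fun _ => (1:ℝ≥0∞)) y := by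
      intro y
      simp only [hp0, if_false]
      by_cases hy : y ∈ boxSet (fun i => l i.succ) (fun i => u i.succ)
      · rw [Set.indicator_of_mem hy]
        rw [mul_one]
        congr 1
        rw [← Real.volume_Ioo (a := l 0) (b := u 0)]
        rw [← lintegral_indicator_one measurableSet_Ioo]
        apply lintegral_congr
        intro t
        by_cases ht : t ∈ Set.Ioo (l 0) (u 0)
        · rw [Set.indicator_of_mem ((hmem t y).2 ⟨ht, hy⟩), Set.indicator_of_mem ht]
          simp [ENNReal.one_rpow]
        · rw [Set.indicator_of_notMem (fun hmem' => ht ((hmem t y).1 hmem').1),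
            Set.indicator_of_notMem ht]
          simp [ENNReal.zero_rpow_of_pos hp0t]
      · rw [Set.indicator_of_notMem hy, mul_zero]
        have : ∀ t : ℝ, (boxSet l u).indicator (fun _ => (1:ℝ≥0∞)) (Fin.cons t y) = 0 :=
          fun t => Set.indicator_of_notMem (fun hmem' => hy ((hmem t y).1 hmem').2) _
        simp only [this]
        rw [ENNReal.zero_rpow_of_pos hp0t]
        simp [ENNReal.zero_rpow_of_pos (by positivity : 0 < 1 / (p 0).toReal)]
        exact hp0t
    calc mixedNormF (fun i => p i.succ) _
        = mixedNormF (fun i => p i.succ) (fun y =>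
            (ENNReal.ofReal (u 0 - l 0)) ^ (1 / (p 0).toReal) *
            (boxSet (fun i => l i.succ) (fun i => u i.succ)).indicator (fun _ => (1:ℝ≥0∞)) y) := by
          congr 1; funext y; exact key y
      _ = (ENNReal.ofReal (u 0 - l 0)) ^ (1 / (p 0).toReal) *
            mixedNormF (fun i => p i.succ)
              ((boxSet (fun i => l i.succ) (fun i => u i.succ)).indicator (fun _ => (1:ℝ≥0∞))) :=
          mixedNormF_const_mul _ (fun i => hp i.succ) _ _
            (ENNReal.rpow_ne_top_of_nonneg (by positivity) ENNReal.ofReal_ne_top)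
      _ = ∏ i, (ENNReal.ofReal (u i - l i)) ^ (1 / (p i).toReal) := by
          rw [ih (fun i => p i.succ) (fun i => hp i.succ), Fin.prod_univ_succ]

end AuxMix

namespace AuxHolder

lemma r'_ne_zero {r r' : ℝ≥0∞} (hrr' : 1 / r + 1 / r' = 1) : r' ≠ 0 := by
  intro h
  rw [h] at hrr'
  simp [ENNReal.div_zero] at hrr'

lemma r'_ne_top {r r' : ℝ≥0∞} (hr : 1 < r) (hrr' : 1 / r + 1 / r' = 1) : r' ≠ ∞ := by
  intro h
  rw [h] at hrr'
  simp at hrr'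
  exact hr.ne' hrr'

lemma sum_toReal {r r' : ℝ≥0∞} (hr : 1 < r) (hrr' : 1 / r + 1 / r' = 1) :
    1 / r.toReal + 1 / r'.toReal = 1 := by
  have hr0 : r ≠ 0 := fun h => by simp [h] at hr
  have h1 : (1 / r) ≠ ∞ := by
    rw [one_div]
    simp [ENNReal.inv_ne_top, hr0]
  have h2 : (1 / r') ≠ ∞ := by
    rw [one_div]
    simp [ENNReal.inv_ne_top, r'_ne_zero hrr']
  have := congrArg ENNReal.toReal hrr'
  rw [ENNReal.toReal_add h1 h2, ENNReal.toReal_one] at this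
  simpa [one_div, ENNReal.toReal_inv] using this

lemma r'_toReal_pos {r r' : ℝ≥0∞} (hr : 1 < r) (hrr' : 1 / r + 1 / r' = 1) :
    0 < r'.toReal :=
  ENNReal.toReal_pos (r'_ne_zero hrr') (r'_ne_top hr hrr')

/-- Hölder inequality in `ℝ≥0∞`, covering the case `r = ∞`. -/
lemma lintegral_mul_le {X : Type*} [MeasurableSpace X] (μ : Measure X) {r r' : ℝ≥0∞}
    (hr : 1 < r) (hrr' : 1 / r + 1 / r' = 1) (f φ : X → ℝ≥0∞)
    (hf : AEMeasurable f μ) (hφ : AEMeasurable φ μ) :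
    ∫⁻ x, f x * φ x ∂μ ≤
      (if r = ∞ then essSup f μ else (∫⁻ x, f x ^ r.toReal ∂μ) ^ (1 / r.toReal)) *
        (∫⁻ x, φ x ^ r'.toReal ∂μ) ^ (1 / r'.toReal) := by
  by_cases hrtop : r = ∞
  · rw [if_pos hrtop]
    have hr'1 : r' = 1 := by
      rw [hrtop] at hrr'
      simpa using hrr'
    rw [hr'1]
    simp only [ENNReal.toReal_one, ENNReal.rpow_one, one_div_one]
    have step1 : ∫⁻ x, f x * φ x ∂μ ≤ ∫⁻ x, essSup f μ * φ x ∂μ := by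
      apply lintegral_mono_ae
      exact (ENNReal.ae_le_essSup f).mono fun x hx => mul_le_mul_left hx _
    by_cases hes : essSup f μ = ∞
    · by_cases h0 : ∫⁻ x, φ x ∂μ = 0
      · have : φ =ᵐ[μ] 0 := (lintegral_eq_zero_iff' hφ).1 h0
        have : ∫⁻ x, f x * φ x ∂μ = 0 := by
          rw [← lintegral_zero (μ := μ)]
          apply lintegral_congr_ae
          exact this.mono fun x hx => by simp [hx]
        simp [this]
      · rw [hes, ENNReal.top_mul h0]
        exact le_top
    · rw [← lintegral_const_mul' _ _ hes]
      exact step1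
  · rw [if_neg hrtop]
    have hrt1 : 1 < r.toReal := by
      have := ENNReal.toReal_strict_mono hrtop hr
      simpa using this
    have hconj : r.toReal.HolderConjugate r'.toReal :=
      Real.holderConjugate_iff.mpr ⟨hrt1, by simpa [one_div] using sum_toReal hr hrr'⟩
    simpa using ENNReal.lintegral_mul_le_Lp_mul_Lq μ hconj hf hφ

end AuxHolder


theorem statement5 {n : ℕ} (hn : 0 < n) (a : Fin n → ℝ) (ha : ∀ i, 1 ≤ a i)
    (p : Fin n → ℝ≥0∞) (hp0 : ∀ i, 0 < p i) (hp1 : ∀ i, p i ≤ 1)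
    (r r' : ℝ≥0∞) (hr : 1 < r) (hrr' : 1 / r + 1 / r' = 1) (s : ℕ)
    (hs : ⌊nuTotal a / aMin a * (1 / (pMinE p).toReal - 1)⌋ ≤ (s : ℤ))
    (A : (Fin n → ℝ) → ℂ) (B : Set (Fin n → ℝ)) (hA : IsAtomFn a p r s A B)
    (g : (Fin n → ℝ) → ℂ) (hg : LocLp r' g) (hgC : campanatoNorm a p r' s g < ∞) :
    Integrable (fun x => A x * g x) volume ∧
      (‖∫ x, A x * g x‖₊ : ℝ≥0∞) ≤ campanatoNorm a p r' s g := by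
  classical
  obtain ⟨x₀, R, hR, hBeq⟩ := hA.ball_mem
  have hr0 : r ≠ 0 := fun h => by simp [h] at hr
  have hr'0 : r' ≠ 0 := AuxHolder.r'_ne_zero hrr'
  have hr'top : r' ≠ ∞ := AuxHolder.r'_ne_top hr hrr'
  have hq : 0 < r'.toReal := AuxHolder.r'_toReal_pos hr hrr'
  -- the bounding box `K`
  set m : Fin n → ℝ := fun i => max 1 R ^ a i with hmdef
  set K : Set (Fin n → ℝ) := Set.univ.pi fun i => Set.Icc (x₀ i - m i) (x₀ i + m i) with hKdef
  have hKcomp : IsCompact K := isCompact_univ_pi fun i => isCompact_Icc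
  have hKmeas : MeasurableSet K := MeasurableSet.univ_pi fun i => measurableSet_Icc
  have hBK : B ⊆ K := by
    rw [hBeq]
    intro y hy
    have hb := AuxGeom.aball_subset_box a ha x₀ R hy
    rw [hKdef, Set.mem_univ_pi]
    intro i
    have h := abs_le.1 (hb i)
    exact ⟨by linarith [h.1], by linarith [h.2]⟩
  have hvolB_fin : volume B < ∞ := lt_of_le_of_lt (measure_mono hBK) hKcomp.measure_lt_top
  by_cases hA0 : A =ᵐ[volume] 0
  · have hgz : (fun x => A x * g x) =ᵐ[volume] (fun _ => (0 : ℂ)) :=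
      hA0.mono fun x hx => by simp only [Pi.zero_apply] at hx; simp [hx]
    refine ⟨(integrable_zero _ _ _).congr hgz.symm, ?_⟩
    rw [integral_congr_ae hgz]
    simp
  -- main case
  have hvolB0 : volume B ≠ 0 := by
    intro h0
    apply hA0
    have hsupp : volume (Function.support A) = 0 := measure_mono_null hA.support_subset h0
    refine ae_iff.2 ?_
    simpa [Function.support] using hsupp
  have hp' : ∀ i, p i ≠ 0 ∧ p i ≠ ∞ := fun i =>
    ⟨(hp0 i).ne', ne_top_of_le_ne_top ENNReal.one_ne_top (hp1 i)⟩
  have hchi0 : chiNorm p B ≠ 0 := by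
    obtain ⟨ε, hε, hbox⟩ := AuxGeom.box_subset_aball hn a ha x₀ hR
    have hsub : AuxMix.boxSet (fun i => x₀ i - ε) (fun i => x₀ i + ε) ⊆ B := by
      rw [hBeq]
      intro y hy
      apply hbox
      intro i
      have h := Set.mem_Ioo.1 (hy i)
      have h1 : x₀ i - ε < y i := h.1
      have h2 : y i < x₀ i + ε := h.2
      rw [abs_sub_lt_iff]
      exact ⟨by linarith, by linarith⟩
    have hmono := AuxMix.mixedNormF_mono p
      ((AuxMix.boxSet (fun i => x₀ i - ε) (fun i => x₀ i + ε)).indicator fun _ => (1:ℝ≥0∞))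
      (B.indicator fun _ => (1:ℝ≥0∞))
      (fun x => Set.indicator_le_indicator_of_subset hsub (fun _ => zero_le) x)
    rw [AuxMix.mixedNormF_box p hp' _ _] at hmono
    have hprodpos : (0:ℝ≥0∞) <
        ∏ i, (ENNReal.ofReal ((x₀ i + ε) - (x₀ i - ε))) ^ (1 / (p i).toReal) := by
      apply CanonicallyOrderedAdd.prod_pos.2
      intro i _
      exact ENNReal.rpow_pos (ENNReal.ofReal_pos.2 (by linarith)) ENNReal.ofReal_ne_top
    exact (lt_of_lt_of_le hprodpos hmono).ne'
  have hchitop : chiNorm p B ≠ ∞ := by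
    intro htop
    apply hA0
    have hsize := hA.size
    rw [htop, ENNReal.div_top] at hsize
    have h0 : eLpNorm A r volume = 0 := le_antisymm hsize zero_le
    exact (eLpNorm_eq_zero_iff hA.measurable.aestronglyMeasurable hr0).1 h0
  have heLp_fin : eLpNorm A r volume < ∞ :=
    lt_of_le_of_lt hA.size (ENNReal.div_lt_top
      (ENNReal.rpow_ne_top_of_nonneg ENNReal.toReal_nonneg hvolB_fin.ne) hchi0)
  have hAmem : MemLp A r volume := ⟨hA.measurable.aestronglyMeasurable, heLp_fin⟩
  -- measurable hull of `B`
  set B'' : Set (Fin n → ℝ) := toMeasurable volume B ∩ K with hB''def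
  have hB''meas : MeasurableSet B'' := (measurableSet_toMeasurable _ _).inter hKmeas
  have hBB'' : B ⊆ B'' := Set.subset_inter (subset_toMeasurable _ _) hBK
  have hB''K : B'' ⊆ K := Set.inter_subset_right
  have hvolB'' : volume B'' ≤ volume B := by
    calc volume B'' ≤ volume (toMeasurable volume B) := measure_mono Set.inter_subset_left
      _ = volume B := measure_toMeasurable _
  have hres : volume.restrict B'' = volume.restrict B := by
    apply le_antisymm
    · calc volume.restrict B'' ≤ volume.restrict (toMeasurable volume B) :=
            Measure.restrict_mono Set.inter_subset_left le_rfl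
        _ = volume.restrict B := Measure.restrict_toMeasurable hvolB_fin.ne
    · exact Measure.restrict_mono hBB'' le_rfl
  set G : (Fin n → ℝ) → ℂ := B''.indicator g with hGdef
  have hrK : volume.restrict B'' ≤ volume.restrict K := Measure.restrict_mono hB''K le_rfl
  have hgK := hg K hKcomp
  have hG_aesm : AEStronglyMeasurable G volume :=
    (aestronglyMeasurable_indicator_iff hB''meas).2 (hgK.1.mono_measure hrK)
  have hG_mem : MemLp G r' volume := ⟨hG_aesm, by
    rw [hGdef, eLpNorm_indicator_eq_eLpNorm_restrict hB''meas]
    exact lt_of_le_of_lt (eLpNorm_mono_measure _ hrK) hgK.2⟩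
  have hAg_eq : ∀ x, A x * g x = A x * G x := by
    intro x
    by_cases hx : A x = 0
    · simp [hx]
    · have hxB : x ∈ B := hA.support_subset (Function.mem_support.mpr hx)
      rw [hGdef, Set.indicator_of_mem (hBB'' hxB)]
  have hIA : (if r = ∞ then essSup (fun x => (‖A x‖₊ : ℝ≥0∞)) volume
      else (∫⁻ x, (‖A x‖₊ : ℝ≥0∞) ^ r.toReal) ^ (1 / r.toReal)) = eLpNorm A r volume := by
    by_cases hrtop : r = ∞
    · rw [if_pos hrtop, hrtop, eLpNorm_exponent_top]
      rfl
    · rw [if_neg hrtop, eLpNorm_eq_lintegral_rpow_enorm_toReal hr0 hrtop]; rfl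
  have hAe : AEMeasurable (fun x => (‖A x‖₊ : ℝ≥0∞)) volume :=
    hA.measurable.aestronglyMeasurable.enorm
  have hInt : Integrable (fun x => A x * G x) volume := by
    refine ⟨hA.measurable.aestronglyMeasurable.mul hG_aesm, ?_⟩
    show (∫⁻ x, (‖A x * G x‖₊ : ℝ≥0∞) ∂volume) < ⊤
    have heq : ∀ x, ((‖A x * G x‖₊ : ℝ≥0∞)) = (‖A x‖₊ : ℝ≥0∞) * (‖G x‖₊ : ℝ≥0∞) := fun x => by
      rw [nnnorm_mul, ENNReal.coe_mul]
    calc ∫⁻ x, (‖A x * G x‖₊ : ℝ≥0∞) = ∫⁻ x, (‖A x‖₊ : ℝ≥0∞) * (‖G x‖₊ : ℝ≥0∞) :=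
          lintegral_congr heq
      _ ≤ _ := AuxHolder.lintegral_mul_le volume hr hrr' _ _ hAe hG_aesm.enorm
      _ < ∞ := by
          rw [hIA]
          apply ENNReal.mul_lt_top heLp_fin
          apply ENNReal.rpow_lt_top_of_nonneg (by positivity)
          intro htop
          have hG2 := hG_mem.2.ne
          rw [eLpNorm_eq_lintegral_rpow_enorm_toReal hr'0 hr'top] at hG2
          change (∫⁻ x, (‖G x‖₊ : ℝ≥0∞) ^ r'.toReal) ^ (1 / r'.toReal) ≠ ∞ at hG2
          rw [htop,
            ENNReal.top_rpow_of_pos (one_div_pos.2 hq)] at hG2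
          exact hG2 rfl
  have hfun : (fun x => A x * g x) = fun x => A x * G x := funext hAg_eq
  have hInt' : Integrable (fun x => A x * g x) volume := by rw [hfun]; exact hInt
  -- integrability of `A`
  haveI : IsFiniteMeasure (volume.restrict B'') := ⟨by
    rw [Measure.restrict_apply_univ]
    exact lt_of_le_of_lt hvolB'' hvolB_fin⟩
  have hAint : Integrable A volume := by
    have h2 : IntegrableOn A B'' volume := (hAmem.restrict B'').integrable hr.le
    have h3 : B''.indicator A = A :=
      Set.indicator_eq_self.2 (subset_trans hA.support_subset hBB'')
    rw [← h3]
    exact (integrable_indicator_iff hB''meas).2 h2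
  -- bound for the coordinates on `K`
  set Mb : ℝ := 1 + ∑ i, (|x₀ i| + m i) with hMbdef
  have hm_pos : ∀ i, 0 < m i := fun i =>
    Real.rpow_pos_of_pos (lt_of_lt_of_le one_pos (le_max_left _ _)) _
  have hMb1 : (1:ℝ) ≤ Mb := by
    have h0 : (0:ℝ) ≤ ∑ i, (|x₀ i| + m i) :=
      Finset.sum_nonneg fun i _ => by positivity
    rw [hMbdef]; linarith
  have hK_coord : ∀ x ∈ K, ∀ i, |x i| ≤ Mb := by
    intro x hx i
    have hxi := Set.mem_univ_pi.1 hx i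
    rw [Set.mem_Icc] at hxi
    have h1 : |x i| ≤ |x₀ i| + m i := by
      have h2 : |x i - x₀ i| ≤ m i := abs_le.2 ⟨by linarith [hxi.1], by linarith [hxi.2]⟩
      calc |x i| = |x₀ i + (x i - x₀ i)| := by ring_nf
        _ ≤ |x₀ i| + |x i - x₀ i| := abs_add_le _ _
        _ ≤ |x₀ i| + m i := by linarith
    have h2 : |x₀ i| + m i ≤ ∑ j, (|x₀ j| + m j) :=
      Finset.single_le_sum (f := fun j => |x₀ j| + m j) (fun j _ => by positivity)
        (Finset.mem_univ i)
    rw [hMbdef]; linarith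
  -- integrability of `A` against monomials
  have hmono_meas : ∀ d : Fin n → ℕ,
      Measurable fun x : Fin n → ℝ => ∏ i, (x i : ℂ) ^ d i := by
    intro d
    apply Finset.measurable_prod
    intro i _
    exact (Complex.measurable_ofReal.comp (measurable_pi_apply i)).pow_const _
  have hmono_int : ∀ d : Fin n → ℕ, (∑ i, d i) ≤ s →
      Integrable (fun x => A x * ∏ i, (x i : ℂ) ^ d i) volume := by
    intro d hd
    apply Integrable.mono' (hAint.norm.const_mul (Mb ^ s))
      ((hA.measurable.mul (hmono_meas d)).aestronglyMeasurable)
    apply Filter.Eventually.of_forall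
    intro x
    by_cases hx : A x = 0
    · simp only [Pi.mul_apply, hx, zero_mul, norm_zero]
      positivity
    · have hxK : x ∈ K := hBK (hA.support_subset (Function.mem_support.mpr hx))
      rw [Pi.mul_apply, norm_mul]
      have hb : ‖∏ i, (x i : ℂ) ^ d i‖ ≤ Mb ^ s := by
        rw [norm_prod]
        calc ∏ i, ‖(x i : ℂ) ^ d i‖ = ∏ i, |x i| ^ d i := by
              apply Finset.prod_congr rfl
              intro i _
              rw [norm_pow, Complex.norm_real, Real.norm_eq_abs]
          _ ≤ ∏ i, Mb ^ d i :=
              Finset.prod_le_prod (fun i _ => by positivity)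
                (fun i _ => pow_le_pow_left₀ (abs_nonneg _) (hK_coord x hxK i) _)
          _ = Mb ^ (∑ i, d i) := Finset.prod_pow_eq_pow_sum _ _ _
          _ ≤ Mb ^ s := pow_le_pow_right₀ hMb1 hd
      calc ‖A x‖ * ‖∏ i, (x i : ℂ) ^ d i‖ ≤ ‖A x‖ * Mb ^ s :=
            mul_le_mul_of_nonneg_left hb (norm_nonneg _)
        _ = Mb ^ s * ‖A x‖ := mul_comm _ _
  -- vanishing against polynomials
  have hAP : ∀ P : (Fin n → ℝ) → ℂ, IsPolyDeg s P →
      Integrable (fun x => A x * P x) volume ∧ (∫ x, A x * P x) = 0 := by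
    rintro P ⟨Q, hdeg, hPeq⟩
    have hdsum : ∀ d ∈ Q.support, (∑ i, d i) ≤ s := by
      intro d hd
      have h1 := MvPolynomial.le_totalDegree hd
      have h2 : (d.sum fun _ e => e) = ∑ i, d i := Finsupp.sum_fintype _ _ (fun _ => rfl)
      rw [h2] at h1
      exact le_trans h1 hdeg
    have hfun2 : ∀ x, A x * P x =
        ∑ d ∈ Q.support, MvPolynomial.coeff d Q * (A x * ∏ i, (x i : ℂ) ^ d i) := by
      intro x
      rw [hPeq, MvPolynomial.eval_eq, Finset.mul_sum]
      apply Finset.sum_congr rfl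
      intro d hd
      have hprod : (∏ i ∈ d.support, ((x i : ℂ)) ^ d i) = ∏ i, ((x i : ℂ)) ^ d i := by
        apply Finset.prod_subset (Finset.subset_univ _)
        intro i _ hid
        rw [Finsupp.notMem_support_iff.1 hid, pow_zero]
      rw [hprod]; ring
    have hint : ∀ d ∈ Q.support, Integrable
        (fun x => MvPolynomial.coeff d Q * (A x * ∏ i, (x i : ℂ) ^ d i)) volume :=
      fun d hd => ((hmono_int (fun i => d i) (hdsum d hd)).const_mul _)
    constructor
    · rw [show (fun x => A x * P x) = fun x =>
          ∑ d ∈ Q.support, MvPolynomial.coeff d Q * (A x * ∏ i, (x i : ℂ) ^ d i)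
          from funext hfun2]
      exact integrable_finset_sum _ hint
    · rw [show (fun x => A x * P x) = fun x =>
          ∑ d ∈ Q.support, MvPolynomial.coeff d Q * (A x * ∏ i, (x i : ℂ) ^ d i)
          from funext hfun2]
      rw [integral_finset_sum _ hint]
      apply Finset.sum_eq_zero
      intro d hd
      rw [integral_const_mul, hA.moments (fun i => d i) (hdsum d hd), mul_zero]
  refine ⟨hInt', ?_⟩
  rw [campanatoNorm]
  have hfinal : ∀ P ∈ {P : (Fin n → ℝ) → ℂ | IsPolyDeg s P},
      (‖∫ x, A x * g x‖₊ : ℝ≥0∞) ≤ volume B / chiNorm p B *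
        (if r' = ∞ then essSup (fun x => (‖g x - P x‖₊ : ℝ≥0∞)) (volume.restrict B)
         else ((volume B)⁻¹ * ∫⁻ x in B, (‖g x - P x‖₊ : ℝ≥0∞) ^ r'.toReal)
           ^ (1 / r'.toReal)) := by
    intro P hP
    rw [if_neg hr'top]
    have hPd : IsPolyDeg s P := hP
    have hPint := hAP P hPd
    have hval : ∫ x, A x * g x = ∫ x, A x * (g x - P x) := by
      have h1 : ∀ x, A x * (g x - P x) = A x * g x - A x * P x := fun x => by ring
      rw [show (fun x => A x * (g x - P x)) = fun x => A x * g x - A x * P x from funext h1]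
      rw [integral_sub hInt' hPint.1, hPint.2, sub_zero]
    rw [hval]
    set Φ : (Fin n → ℝ) → ℝ≥0∞ := B''.indicator (fun x => (‖g x - P x‖₊ : ℝ≥0∞)) with hΦdef
    have hPmeas : Measurable P := by
      obtain ⟨Q, _, hPeq⟩ := hPd
      rw [show P = fun x => MvPolynomial.eval (fun i => (x i : ℂ)) Q from funext hPeq]
      have heval : (fun x : Fin n → ℝ => MvPolynomial.eval (fun i => (x i : ℂ)) Q)
          = fun x => ∑ d ∈ Q.support, MvPolynomial.coeff d Q * ∏ i ∈ d.support, (x i : ℂ) ^ d i :=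
        funext fun x => MvPolynomial.eval_eq _ _
      rw [heval]
      apply Finset.measurable_sum
      intro d _
      apply Measurable.const_mul
      apply Finset.measurable_prod
      intro i _
      exact (Complex.measurable_ofReal.comp (measurable_pi_apply i)).pow_const _
    have hΦmeas : AEMeasurable Φ volume := by
      rw [hΦdef, aemeasurable_indicator_iff hB''meas]
      exact ((hgK.1.mono_measure hrK).sub hPmeas.aestronglyMeasurable).enorm
    have hstep1 : (‖∫ x, A x * (g x - P x)‖₊ : ℝ≥0∞) ≤ ∫⁻ x, (‖A x‖₊ : ℝ≥0∞) * Φ x := by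
      refine le_trans (enorm_integral_le_lintegral_enorm _) (le_of_eq (lintegral_congr ?_))
      intro x
      by_cases hx : A x = 0
      · simp [hx]
      · have hxB'' : x ∈ B'' := hBB'' (hA.support_subset (Function.mem_support.mpr hx))
        rw [hΦdef, Set.indicator_of_mem hxB'', enorm_mul]; rfl
    have hstep2 := AuxHolder.lintegral_mul_le volume hr hrr'
      (fun x => (‖A x‖₊ : ℝ≥0∞)) Φ hAe hΦmeas
    have hΦq : (∫⁻ x, Φ x ^ r'.toReal) = ∫⁻ x in B, (‖g x - P x‖₊ : ℝ≥0∞) ^ r'.toReal := by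
      have h1 : ∀ x, Φ x ^ r'.toReal
          = B''.indicator (fun x => (‖g x - P x‖₊ : ℝ≥0∞) ^ r'.toReal) x := by
        intro x
        rw [hΦdef]
        by_cases hx : x ∈ B''
        · rw [Set.indicator_of_mem hx, Set.indicator_of_mem hx]
        · rw [Set.indicator_of_notMem hx, Set.indicator_of_notMem hx,
            ENNReal.zero_rpow_of_pos hq]
      rw [lintegral_congr h1, lintegral_indicator hB''meas _, hres]
    set L : ℝ≥0∞ := ∫⁻ x in B, (‖g x - P x‖₊ : ℝ≥0∞) ^ r'.toReal with hLdef
    have hbound : (‖∫ x, A x * (g x - P x)‖₊ : ℝ≥0∞) ≤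
        (volume B ^ (1/r).toReal / chiNorm p B) * L ^ (1 / r'.toReal) := by
      refine le_trans hstep1 (le_trans hstep2 ?_)
      rw [hIA, hΦq]
      exact mul_le_mul_left hA.size _
    refine le_trans hbound (le_of_eq ?_)
    have hq1 : (1/r).toReal = 1 - 1/r'.toReal := by
      have hsum := AuxHolder.sum_toReal hr hrr'
      have h2 : (1/r).toReal = 1/r.toReal := by
        rw [one_div, one_div, ENNReal.toReal_inv]
      linarith
    have hkey : volume B * (volume B ^ (1/r'.toReal))⁻¹ = volume B ^ (1/r).toReal := by
      rw [← ENNReal.rpow_neg, hq1]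
      calc volume B * volume B ^ (-(1/r'.toReal))
          = volume B ^ (1:ℝ) * volume B ^ (-(1/r'.toReal)) := by rw [ENNReal.rpow_one]
        _ = volume B ^ (1 + -(1/r'.toReal)) := (ENNReal.rpow_add _ _ hvolB0 hvolB_fin.ne).symm
        _ = volume B ^ (1 - 1/r'.toReal) := by ring_nf
    simp only [div_eq_mul_inv] at hkey ⊢
    rw [ENNReal.mul_rpow_of_nonneg _ _ (by positivity : (0:ℝ) ≤ 1 * (r'.toReal)⁻¹),
      ENNReal.inv_rpow, ← hkey]
    ring
  exact le_trans (le_iInf₂ hfinal)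
    (le_iSup₂ (f := fun (B' : Set (Fin n → ℝ)) (_ : B' ∈ aballs a) =>
      ⨅ P ∈ {P : (Fin n → ℝ) → ℂ | IsPolyDeg s P}, volume B' / chiNorm p B' *
        (if r' = ∞ then essSup (fun x => (‖g x - P x‖₊ : ℝ≥0∞)) (volume.restrict B')
         else ((volume B')⁻¹ * ∫⁻ x in B', (‖g x - P x‖₊ : ℝ≥0∞) ^ r'.toReal)
           ^ (1 / r'.toReal))) B hA.ball_mem)
end
end

section
/- Let $\vec a=(a_1,\dots,a_n)\in[1,\infty)^n$, $\vec p\in(0,\infty]^n$, $q\in[1,\infty]$ and $s\in\mathbb{Z}_+$. For a locally $q$-integrable function $g$ on $\mathbb{R}^n$, one has $\|g\|_{\mathcal L^{\vec a}_{\vec p,q,s}(\mathbb{R}^n)}=0$ if and only if $g$ coincides almost everywhere on $\mathbb{R}^n$ with a polynomial of degree at most $s$. -/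
open MeasureTheory ENNReal Filter

noncomputable section

namespace CampAux

variable {n : ℕ}

/-- The defining sum. -/
def F (a z : Fin n → ℝ) (t : ℝ) : ℝ := ∑ i, z i ^ 2 / t ^ (2 * a i)

lemma F_anti (ha : ∀ i, 1 ≤ a i) {z : Fin n → ℝ} (hz : z ≠ 0) {t t' : ℝ}
    (ht : 0 < t) (htt : t < t') : F a z t' < F a z t := by
  obtain ⟨j, hj⟩ := Function.ne_iff.mp hz
  have hj' : z j ≠ 0 := by simpa using hj
  apply Finset.sum_lt_sum
  · intro i _
    have he : (0:ℝ) ≤ 2 * a i := by have := ha i; linarith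
    exact div_le_div_of_nonneg_left (sq_nonneg _)
      (Real.rpow_pos_of_pos ht _) (Real.rpow_le_rpow ht.le htt.le he)
  · refine ⟨j, Finset.mem_univ j, ?_⟩
    have he : (0:ℝ) < 2 * a j := by have := ha j; linarith
    have h1 : t ^ (2 * a j) < t' ^ (2 * a j) := Real.rpow_lt_rpow ht.le htt he
    have hzj : 0 < z j ^ 2 := lt_of_le_of_ne (sq_nonneg _) (Ne.symm (pow_ne_zero 2 hj'))
    exact div_lt_div_of_pos_left hzj (Real.rpow_pos_of_pos ht _) h1


lemma F_continuousOn (a z : Fin n → ℝ) : ContinuousOn (F a z) (Set.Ioi 0) := by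
  apply continuousOn_finset_sum
  intro i _
  apply ContinuousOn.div continuousOn_const
  · intro t ht
    exact (Real.continuousAt_rpow_const t _ (Or.inl (ne_of_gt ht))).continuousWithinAt
  · intro t ht
    exact (Real.rpow_pos_of_pos ht _).ne'

/-- For `z ≠ 0`, a root of `F a z = 1` exists below any point where `F ≤ 1`. -/
lemma exists_root (ha : ∀ i, 1 ≤ a i) {z : Fin n → ℝ} (hz : z ≠ 0) {b : ℝ}
    (hb : 0 < b) (hFb : F a z b ≤ 1) : ∃ t, 0 < t ∧ t ≤ b ∧ F a z t = 1 := by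
  obtain ⟨j, hj⟩ := Function.ne_iff.mp hz
  have hj' : z j ≠ 0 := by simpa using hj
  have hzj : 0 < z j ^ 2 := by positivity
  set t₂ := min b (min 1 (z j ^ 2)) with ht₂def
  have ht₂ : 0 < t₂ := lt_min hb (lt_min one_pos hzj)
  have ht₂b : t₂ ≤ b := min_le_left _ _
  have h1 : 1 ≤ F a z t₂ := by
    have hle : t₂ ^ (2 * a j) ≤ z j ^ 2 := by
      have h2 : t₂ ^ (2 * a j) ≤ t₂ ^ (1:ℝ) := by
        apply Real.rpow_le_rpow_of_exponent_ge ht₂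
        · exact le_trans (min_le_right _ _) (min_le_left _ _)
        · have := ha j; linarith
      rw [Real.rpow_one] at h2
      exact h2.trans (le_trans (min_le_right _ _) (min_le_right _ _))
    have hterm : 1 ≤ z j ^ 2 / t₂ ^ (2 * a j) :=
      (one_le_div (Real.rpow_pos_of_pos ht₂ _)).mpr hle
    have hsum : z j ^ 2 / t₂ ^ (2 * a j) ≤ ∑ i, z i ^ 2 / t₂ ^ (2 * a i) :=
      Finset.single_le_sum (f := fun i => z i ^ 2 / t₂ ^ (2 * a i))
        (fun i _ => by positivity) (Finset.mem_univ j)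
    exact hterm.trans hsum
  have hcont : ContinuousOn (F a z) (Set.Icc t₂ b) :=
    (F_continuousOn a z).mono (fun t ht => lt_of_lt_of_le ht₂ ht.1)
  have hIVT := intermediate_value_Icc' ht₂b hcont
  have h1mem : (1:ℝ) ∈ Set.Icc (F a z b) (F a z t₂) := ⟨hFb, h1⟩
  obtain ⟨t, htmem, htF⟩ := hIVT h1mem
  exact ⟨t, lt_of_lt_of_le ht₂ htmem.1, htmem.2, htF⟩

/-- `F` is eventually `< 1`. -/
lemma exists_large (ha : ∀ i, 1 ≤ a i) (z : Fin n → ℝ) :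
    ∃ b, 0 < b ∧ F a z b < 1 := by
  set S := ∑ i, z i ^ 2 with hS
  have hS0 : 0 ≤ S := Finset.sum_nonneg fun i _ => sq_nonneg _
  refine ⟨max 1 (S + 1), lt_of_lt_of_le one_pos (le_max_left _ _), ?_⟩
  set b := max 1 (S + 1) with hbdef
  have hb1 : 1 ≤ b := le_max_left _ _
  have hb0 : 0 < b := lt_of_lt_of_le one_pos hb1
  have hbS : S < b := lt_of_lt_of_le (lt_add_one S) (le_max_right _ _)
  have hbound : ∀ i : Fin n, z i ^ 2 / b ^ (2 * a i) ≤ z i ^ 2 / b := by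
    intro i
    have hexp : (1:ℝ) ≤ 2 * a i := by have := ha i; linarith
    have : b ^ (1:ℝ) ≤ b ^ (2 * a i) := Real.rpow_le_rpow_of_exponent_le hb1 hexp
    rw [Real.rpow_one] at this
    exact div_le_div_of_nonneg_left (sq_nonneg _) hb0 this
  calc F a z b ≤ ∑ i, z i ^ 2 / b := Finset.sum_le_sum fun i _ => hbound i
    _ = S / b := by rw [← Finset.sum_div]
    _ < 1 := (div_lt_one hb0).mpr hbS

lemma anorm_zero' : anorm (n := n) a 0 = 0 := by
  have : {t : ℝ | 0 < t ∧ ∑ i, (0:Fin n → ℝ) i ^ 2 / t ^ (2 * a i) = 1} = ∅ := by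
    ext t
    simp
  rw [anorm, this, Real.sInf_empty]

lemma anorm_lt_iff (ha : ∀ i, 1 ≤ a i) (z : Fin n → ℝ) {r : ℝ} (hr : 0 < r) :
    anorm a z < r ↔ ∃ t, 0 < t ∧ t < r ∧ F a z t < 1 := by
  by_cases hz : z = 0
  · subst hz
    rw [anorm_zero']
    simp only [hr, true_iff]
    refine ⟨r / 2, by positivity, by linarith, ?_⟩
    simp [F]
  · have hbdd : BddBelow {t : ℝ | 0 < t ∧ ∑ i, z i ^ 2 / t ^ (2 * a i) = 1} :=
      ⟨0, fun t ht => ht.1.le⟩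
    have hFset : {t : ℝ | 0 < t ∧ ∑ i, z i ^ 2 / t ^ (2 * a i) = 1}
        = {t : ℝ | 0 < t ∧ F a z t = 1} := rfl
    obtain ⟨b, hb0, hFb⟩ := exists_large ha z
    obtain ⟨t₀, ht₀0, _, ht₀F⟩ := exists_root ha hz hb0 hFb.le
    have hne : {t : ℝ | 0 < t ∧ F a z t = 1}.Nonempty := ⟨t₀, ht₀0, ht₀F⟩
    constructor
    · intro h
      rw [anorm, hFset] at h
      obtain ⟨u, hu, hur⟩ := (csInf_lt_iff hbdd hne).mp h
      refine ⟨(u + r) / 2, by nlinarith [hu.1], by linarith, ?_⟩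
      have huF : F a z u = 1 := hu.2
      have := F_anti ha hz hu.1 (show u < (u + r)/2 by linarith)
      rw [huF] at this
      exact this
    · rintro ⟨t, ht0, htr, htF⟩
      obtain ⟨t₁, ht₁0, ht₁le, ht₁F⟩ := exists_root ha hz ht0 htF.le
      rw [anorm, hFset]
      exact lt_of_le_of_lt (csInf_le hbdd ⟨ht₁0, ht₁F⟩) (lt_of_le_of_lt ht₁le htr)



lemma isOpen_aball (ha : ∀ i, 1 ≤ a i) (x : Fin n → ℝ) {r : ℝ} (hr : 0 < r) :
    IsOpen (aball a x r) := by
  have hset : aball a x r =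
      ⋃ (t : ℝ) (_ : 0 < t ∧ t < r), {y : Fin n → ℝ | F a (y - x) t < 1} := by
    ext y
    simp only [aball, Set.mem_setOf_eq, Set.mem_iUnion]
    rw [anorm_lt_iff ha _ hr]
    constructor
    · rintro ⟨t, h1, h2, h3⟩; exact ⟨t, ⟨h1, h2⟩, h3⟩
    · rintro ⟨t, ⟨h1, h2⟩, h3⟩; exact ⟨t, h1, h2, h3⟩
  rw [hset]
  apply isOpen_iUnion; intro t; apply isOpen_iUnion; intro _
  have hcont : Continuous fun y : Fin n → ℝ => F a (y - x) t := by
    apply continuous_finset_sum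
    intro i _
    simp only [Pi.sub_apply]
    exact (((continuous_apply i).sub continuous_const).pow 2).div_const _
  exact isOpen_lt hcont continuous_const

lemma ball_subset_aball (hn : 0 < n) (ha : ∀ i, 1 ≤ a i) (x : Fin n → ℝ) {r : ℝ}
    (hr : 0 < r) : ∃ δ > 0, Metric.ball x δ ⊆ aball a x r := by
  haveI : Nonempty (Fin n) := ⟨⟨0, hn⟩⟩
  set t₁ := min r 1 / 2 with ht₁def
  have ht₁0 : 0 < t₁ := by
    have : 0 < min r 1 := lt_min hr one_pos
    positivity
  have ht₁r : t₁ < r := by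
    have h1 : min r 1 ≤ r := min_le_left _ _
    have : t₁ ≤ r / 2 := by rw [ht₁def]; linarith
    linarith
  set c := Finset.univ.inf' Finset.univ_nonempty (fun i => t₁ ^ (2 * a i)) with hcdef
  have hc0 : 0 < c := by
    rw [hcdef, Finset.lt_inf'_iff]
    intro i _
    exact Real.rpow_pos_of_pos ht₁0 _
  have hcn : 0 < c / (n + 1) := by positivity
  set δ := Real.sqrt (c / (n + 1)) with hδdef
  have hδ0 : 0 < δ := Real.sqrt_pos.mpr hcn
  refine ⟨δ, hδ0, ?_⟩
  intro y hy
  rw [Metric.mem_ball] at hy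
  have hterm : ∀ i : Fin n, (y - x) i ^ 2 / t₁ ^ (2 * a i) ≤ 1 / (n + 1) := by
    intro i
    have h1 : dist (y i) (x i) ≤ dist y x := dist_le_pi_dist y x i
    have h2 : |y i - x i| < δ := by
      rw [← Real.dist_eq]; exact lt_of_le_of_lt h1 hy
    have h3 : (y - x) i ^ 2 ≤ δ ^ 2 := by
      simp only [Pi.sub_apply]
      nlinarith [abs_nonneg (y i - x i), sq_abs (y i - x i)]
    have h4 : δ ^ 2 = c / (n + 1) := Real.sq_sqrt hcn.le
    have h5 : c ≤ t₁ ^ (2 * a i) :=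
      Finset.inf'_le (fun i => t₁ ^ (2 * a i)) (Finset.mem_univ i)
    have hden : 0 < t₁ ^ (2 * a i) := Real.rpow_pos_of_pos ht₁0 _
    calc (y - x) i ^ 2 / t₁ ^ (2 * a i) ≤ δ ^ 2 / t₁ ^ (2 * a i) :=
          (div_le_div_iff_of_pos_right hden).mpr h3
      _ ≤ δ ^ 2 / c := div_le_div_of_nonneg_left (sq_nonneg _) hc0 h5
      _ = 1 / (n + 1) := by rw [h4]; field_simp
  have hsum : F a (y - x) t₁ ≤ n * (1 / (n + 1) : ℝ) := by
    have := Finset.sum_le_sum (fun i (_ : i ∈ Finset.univ) => hterm i)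
    simpa [F, Finset.sum_const, Finset.card_univ] using this
  have hlt : (n : ℝ) * (1 / (n + 1)) < 1 := by
    rw [mul_one_div, div_lt_one (by positivity)]
    exact_mod_cast lt_add_one n
  show anorm a (y - x) < r
  rw [anorm_lt_iff ha _ hr]
  exact ⟨t₁, ht₁0, ht₁r, lt_of_le_of_lt hsum hlt⟩

lemma aball_subset_box (ha : ∀ i, 1 ≤ a i) (x : Fin n → ℝ) {r : ℝ} (hr : 0 < r) :
    ∃ R : Fin n → ℝ, (∀ i, 0 < R i) ∧
      aball a x r ⊆ Set.pi Set.univ (fun i => Set.Icc (x i - R i) (x i + R i)) := by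
  refine ⟨fun i => Real.sqrt ((max 1 r) ^ (2 * a i)), fun i => ?_, ?_⟩
  · exact Real.sqrt_pos.mpr (Real.rpow_pos_of_pos (lt_of_lt_of_le one_pos (le_max_left _ _)) _)
  · intro y hy
    rw [Set.mem_pi]
    intro i _
    have hy' : anorm a (y - x) < r := hy
    rw [anorm_lt_iff ha _ hr] at hy'
    obtain ⟨t, ht0, htr, htF⟩ := hy'
    have hterm : (y - x) i ^ 2 / t ^ (2 * a i) ≤ F a (y - x) t :=
      Finset.single_le_sum (f := fun j => (y - x) j ^ 2 / t ^ (2 * a j))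
        (fun j _ => by positivity) (Finset.mem_univ i)
    have hden : 0 < t ^ (2 * a i) := Real.rpow_pos_of_pos ht0 _
    have h1 : (y - x) i ^ 2 < t ^ (2 * a i) := by
      have := lt_of_le_of_lt hterm htF
      rwa [div_lt_one hden] at this
    have h2 : t ^ (2 * a i) ≤ (max 1 r) ^ (2 * a i) := by
      apply Real.rpow_le_rpow ht0.le (le_trans htr.le (le_max_right _ _))
      have := ha i; linarith
    have h3 : |y i - x i| ≤ Real.sqrt ((max 1 r) ^ (2 * a i)) := by
      apply Real.abs_le_sqrt
      have : (y - x) i ^ 2 ≤ (max 1 r) ^ (2 * a i) := le_trans h1.le h2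
      simpa using this
    rw [Set.mem_Icc]
    constructor <;> [linarith [abs_le.mp h3]; linarith [(abs_le.mp h3).2]]

lemma aball_mono (x : Fin n → ℝ) {r r' : ℝ} (h : r ≤ r') :
    aball a x r ⊆ aball a x r' := fun y hy => lt_of_lt_of_le hy h

lemma iUnion_aball (ha : ∀ i, 1 ≤ a i) :
    (⋃ k : ℕ, aball a 0 ((k : ℝ) + 1)) = Set.univ := by
  ext z
  simp only [Set.mem_iUnion, Set.mem_univ, iff_true]
  obtain ⟨b, hb0, hFb⟩ := exists_large ha (z - 0)
  obtain ⟨k, hk⟩ := exists_nat_gt b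
  refine ⟨k, ?_⟩
  show anorm a (z - 0) < (k : ℝ) + 1
  rw [anorm_lt_iff ha _ (by positivity)]
  exact ⟨b, hb0, by linarith, hFb⟩

lemma mixedNormF_mono : ∀ {m : ℕ} (p : Fin m → ℝ≥0∞) (f g : (Fin m → ℝ) → ℝ≥0∞),
    (∀ x, f x ≤ g x) → mixedNormF p f ≤ mixedNormF p g := by
  intro m
  induction m with
  | zero => intro p f g h; exact h _
  | succ m ih =>
    intro p f g h
    show mixedNormF (fun i => p i.succ) _ ≤ mixedNormF (fun i => p i.succ) _
    apply ih
    intro y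
    by_cases hp : p 0 = ∞
    · simp only [hp, if_true]
      exact essSup_mono_ae (Filter.Eventually.of_forall fun t => h _)
    · simp only [hp, if_false]
      apply ENNReal.rpow_le_rpow _ (by positivity)
      exact lintegral_mono fun t => ENNReal.rpow_le_rpow (h _) ENNReal.toReal_nonneg

lemma indicator_rpow (S : Set ℝ) (t : ℝ) {e : ℝ} (he : 0 < e) :
    (S.indicator (fun _ => (1 : ℝ≥0∞)) t) ^ e = S.indicator (fun _ => (1 : ℝ≥0∞)) t := by
  by_cases ht : t ∈ S
  · simp [Set.indicator_of_mem ht]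
  · simp [Set.indicator_of_notMem ht, ENNReal.zero_rpow_of_pos he]

lemma mixedNormF_box_le : ∀ {m : ℕ} (p : Fin m → ℝ≥0∞), (∀ i, 0 < p i) →
    ∀ (I : Fin m → Set ℝ), (∀ i, MeasurableSet (I i)) → (∀ i, volume (I i) ≠ ∞) →
    ∀ (c : ℝ≥0∞), c ≠ ∞ →
    mixedNormF p (fun x => c * ∏ i, (I i).indicator (fun _ => (1:ℝ≥0∞)) (x i)) ≤
      c * ∏ i, (if p i = ∞ then 1 else (volume (I i)) ^ (1 / (p i).toReal)) := by
  intro m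
  induction m with
  | zero =>
    intro p hp I hI hIv c hc
    simp [mixedNormF]
  | succ m ih =>
    intro p hp I hI hIv c hc
    have hA_ne_top : ∀ y : Fin m → ℝ,
        c * ∏ i : Fin m, (I i.succ).indicator (fun _ => (1:ℝ≥0∞)) (y i) ≠ ∞ := by
      intro y
      apply ENNReal.mul_ne_top hc
      apply ne_of_lt
      calc ∏ i : Fin m, (I i.succ).indicator (fun _ => (1:ℝ≥0∞)) (y i)
          ≤ ∏ i : Fin m, 1 := Finset.prod_le_prod' (fun i _ => by
            by_cases h : y i ∈ I i.succ <;>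
              simp [Set.indicator_of_mem, Set.indicator_of_notMem, h])
        _ = 1 := Finset.prod_const_one
        _ < ∞ := ENNReal.one_lt_top
    have key : ∀ y : Fin m → ℝ,
        (if p 0 = ∞ then
          essSup (fun t => (fun x : Fin (m+1) → ℝ =>
            c * ∏ i, (I i).indicator (fun _ => (1:ℝ≥0∞)) (x i)) (Fin.cons t y)) volume
        else (∫⁻ t, ((fun x : Fin (m+1) → ℝ =>
            c * ∏ i, (I i).indicator (fun _ => (1:ℝ≥0∞)) (x i))
            (Fin.cons t y)) ^ (p 0).toReal) ^ (1 / (p 0).toReal)) ≤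
        (c * (if p 0 = ∞ then 1 else (volume (I 0)) ^ (1 / (p 0).toReal))) *
          ∏ i : Fin m, (I i.succ).indicator (fun _ => (1:ℝ≥0∞)) (y i) := by
      intro y
      have hsplit : ∀ t : ℝ,
          c * ∏ i : Fin (m+1), (I i).indicator (fun _ => (1:ℝ≥0∞)) ((Fin.cons t y : Fin (m+1) → ℝ) i)
          = (c * ∏ i : Fin m, (I i.succ).indicator (fun _ => (1:ℝ≥0∞)) (y i)) *
              (I 0).indicator (fun _ => (1:ℝ≥0∞)) t := by
        intro t
        rw [Fin.prod_univ_succ]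
        simp only [Fin.cons_zero, Fin.cons_succ]
        ring
      set A := c * ∏ i : Fin m, (I i.succ).indicator (fun _ => (1:ℝ≥0∞)) (y i) with hA
      by_cases hp0 : p 0 = ∞
      · simp only [hp0, if_true]
        calc essSup (fun t => c * ∏ i : Fin (m+1),
                (I i).indicator (fun _ => (1:ℝ≥0∞)) ((Fin.cons t y : Fin (m+1) → ℝ) i)) volume
            ≤ A := by
              refine essSup_le_of_ae_le _ ?_
              apply Filter.Eventually.of_forall
              intro t
              show c * ∏ i : Fin (m+1),
                (I i).indicator (fun _ => (1:ℝ≥0∞)) ((Fin.cons t y : Fin (m+1) → ℝ) i) ≤ A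
              rw [hsplit t]
              calc A * (I 0).indicator (fun _ => (1:ℝ≥0∞)) t ≤ A * 1 := by
                    apply mul_le_mul_right
                    by_cases h : t ∈ I 0 <;> simp [h]
                _ = A := mul_one A
          _ = (c * 1) * ∏ i : Fin m, (I i.succ).indicator (fun _ => (1:ℝ≥0∞)) (y i) := by
              rw [hA, mul_one]
      · simp only [hp0, if_false]
        have hr0 : 0 < (p 0).toReal := ENNReal.toReal_pos (hp 0).ne' hp0
        have hint : (∫⁻ t, (c * ∏ i : Fin (m+1),
            (I i).indicator (fun _ => (1:ℝ≥0∞)) ((Fin.cons t y : Fin (m+1) → ℝ) i)) ^ (p 0).toReal)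
            = A ^ (p 0).toReal * volume (I 0) := by
          calc (∫⁻ t, (c * ∏ i : Fin (m+1),
                (I i).indicator (fun _ => (1:ℝ≥0∞)) ((Fin.cons t y : Fin (m+1) → ℝ) i)) ^ (p 0).toReal)
              = ∫⁻ t, A ^ (p 0).toReal * (I 0).indicator (fun _ => (1:ℝ≥0∞)) t :=
                lintegral_congr (fun t => by
                  rw [hsplit t, ENNReal.mul_rpow_of_nonneg _ _ hr0.le,
                    indicator_rpow _ _ hr0])
            _ = A ^ (p 0).toReal * ∫⁻ t, (I 0).indicator (fun _ => (1:ℝ≥0∞)) t :=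
                lintegral_const_mul' _ _
                  (ENNReal.rpow_ne_top_of_nonneg hr0.le (hA_ne_top y))
            _ = A ^ (p 0).toReal * volume (I 0) := by
                congr 1
                exact lintegral_indicator_one (hI 0)
        rw [hint, ENNReal.mul_rpow_of_nonneg _ _ (by positivity : (0:ℝ) ≤ 1 / (p 0).toReal),
          ← ENNReal.rpow_mul, mul_one_div, div_self hr0.ne', ENNReal.rpow_one, hA]
        ring_nf
        exact le_refl _
    show mixedNormF (fun i => p i.succ) _ ≤ _
    calc mixedNormF (fun i => p i.succ) _
        ≤ mixedNormF (fun i => p i.succ)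
            (fun y => (c * (if p 0 = ∞ then 1 else (volume (I 0)) ^ (1 / (p 0).toReal))) *
              ∏ i : Fin m, (I i.succ).indicator (fun _ => (1:ℝ≥0∞)) (y i)) :=
          mixedNormF_mono _ _ _ key
      _ ≤ (c * (if p 0 = ∞ then 1 else (volume (I 0)) ^ (1 / (p 0).toReal))) *
            ∏ i : Fin m, (if p i.succ = ∞ then 1 else (volume (I i.succ)) ^ (1 / (p i.succ).toReal)) := by
          apply ih (fun i => p i.succ) (fun i => hp i.succ) (fun i => I i.succ)
            (fun i => hI i.succ) (fun i => hIv i.succ)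
          apply ENNReal.mul_ne_top hc
          by_cases hp0 : p 0 = ∞
          · simp [hp0]
          · simp only [hp0, if_false]
            exact (ENNReal.rpow_lt_top_of_nonneg (by positivity) (hIv 0)).ne
      _ = c * ∏ i : Fin (m+1), (if p i = ∞ then 1 else (volume (I i)) ^ (1 / (p i).toReal)) := by
          rw [Fin.prod_univ_succ, mul_assoc]

lemma volume_aball_pos (hn : 0 < n) (ha : ∀ i, 1 ≤ a i) (x : Fin n → ℝ) {r : ℝ}
    (hr : 0 < r) : 0 < volume (aball a x r) := by
  obtain ⟨δ, hδ0, hsub⟩ := ball_subset_aball hn ha x hr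
  exact lt_of_lt_of_le (Metric.measure_ball_pos volume x hδ0) (measure_mono hsub)

lemma volume_aball_ne_top (ha : ∀ i, 1 ≤ a i) (x : Fin n → ℝ) {r : ℝ} (hr : 0 < r) :
    volume (aball a x r) ≠ ∞ := by
  obtain ⟨R, hR0, hsub⟩ := aball_subset_box ha x hr
  have hcomp : IsCompact (Set.pi Set.univ (fun i => Set.Icc (x i - R i) (x i + R i))) :=
    isCompact_univ_pi (fun i => isCompact_Icc)
  exact ne_of_lt (lt_of_le_of_lt (measure_mono hsub) hcomp.measure_lt_top)

lemma chiNorm_aball_ne_top (ha : ∀ i, 1 ≤ a i) {p : Fin n → ℝ≥0∞} (hp0 : ∀ i, 0 < p i)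
    (x : Fin n → ℝ) {r : ℝ} (hr : 0 < r) : chiNorm p (aball a x r) ≠ ∞ := by
  obtain ⟨R, hR0, hsub⟩ := aball_subset_box ha x hr
  set I : Fin n → Set ℝ := fun i => Set.Icc (x i - R i) (x i + R i) with hIdef
  have hI : ∀ i, MeasurableSet (I i) := fun i => measurableSet_Icc
  have hIv : ∀ i, volume (I i) ≠ ∞ := by
    intro i
    rw [hIdef]
    simp [Real.volume_Icc]
  have hle : chiNorm p (aball a x r) ≤
      1 * ∏ i, (if p i = ∞ then 1 else (volume (I i)) ^ (1 / (p i).toReal)) := by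
    refine le_trans (mixedNormF_mono p _ _ ?_) (mixedNormF_box_le p hp0 I hI hIv 1 one_ne_top)
    intro y
    by_cases hy : y ∈ aball a x r
    · have hy' : ∀ i, y i ∈ I i := fun i => (Set.mem_pi.mp (hsub hy)) i (Set.mem_univ i)
      rw [Set.indicator_of_mem hy]
      have : ∀ i, (I i).indicator (fun _ => (1:ℝ≥0∞)) (y i) = 1 := fun i =>
        Set.indicator_of_mem (hy' i) _
      simp [this]
    · rw [Set.indicator_of_notMem hy]
      exact zero_le
  apply ne_of_lt
  refine lt_of_le_of_lt hle ?_
  rw [one_mul]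
  refine ENNReal.prod_lt_top ?_
  intro i _
  by_cases hpi : p i = ∞
  · simp [hpi]
  · simp only [hpi, if_false]
    exact ENNReal.rpow_lt_top_of_nonneg (by positivity) (hIv i)

lemma polyDeg_continuous {s : ℕ} {P : (Fin n → ℝ) → ℂ} (hP : IsPolyDeg s P) :
    Continuous P := by
  obtain ⟨Q, -, hQ⟩ := hP
  have : P = (fun v : Fin n → ℂ => MvPolynomial.eval v Q) ∘ (fun x i => (x i : ℂ)) := by
    funext x; exact hQ x
  rw [this]
  exact Continuous.comp (MvPolynomial.continuous_eval (p := Q))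
    (continuous_pi fun i => Complex.continuous_ofReal.comp (continuous_apply i))

lemma polyeval_analyticOnNhd (Q : MvPolynomial (Fin n) ℂ) :
    AnalyticOnNhd ℝ (fun x : Fin n → ℝ => MvPolynomial.eval (fun i => (x i : ℂ)) Q)
      Set.univ := by
  induction Q using MvPolynomial.induction_on with
  | C c => simpa using (analyticOnNhd_const :
      AnalyticOnNhd ℝ (fun _ : Fin n → ℝ => c) Set.univ)
  | add p q hp hq => simp only [map_add]; exact hp.add hq
  | mul_X p i hp =>
    have hcoord : AnalyticOnNhd ℝ (fun x : Fin n → ℝ => (x i : ℂ)) Set.univ := by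
      intro x _
      exact (Complex.ofRealCLM.comp (ContinuousLinearMap.proj i)).analyticAt x
    simpa [map_mul] using hp.mul hcoord

lemma polyDeg_eq_of_eqOn_ball {s : ℕ} {P1 P2 : (Fin n → ℝ) → ℂ}
    (h1 : IsPolyDeg s P1) (h2 : IsPolyDeg s P2) {x0 : Fin n → ℝ} {δ : ℝ} (hδ : 0 < δ)
    (h : Set.EqOn P1 P2 (Metric.ball x0 δ)) : P1 = P2 := by
  obtain ⟨Q1, -, hQ1⟩ := h1
  obtain ⟨Q2, -, hQ2⟩ := h2
  have hf1 := polyeval_analyticOnNhd Q1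
  have hf2 := polyeval_analyticOnNhd Q2
  have hev : (fun x : Fin n → ℝ => MvPolynomial.eval (fun i => (x i : ℂ)) Q1) =ᶠ[nhds x0]
      (fun x : Fin n → ℝ => MvPolynomial.eval (fun i => (x i : ℂ)) Q2) := by
    apply Filter.eventuallyEq_of_mem (Metric.ball_mem_nhds x0 hδ)
    intro y hy
    show (MvPolynomial.eval fun i => ((y i : ℂ))) Q1 = (MvPolynomial.eval fun i => ((y i : ℂ))) Q2
    rw [← hQ1 y, ← hQ2 y]
    exact h hy
  have := hf1.eqOn_of_preconnected_of_eventuallyEq hf2 isPreconnected_univ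
    (Set.mem_univ x0) hev
  funext z
  rw [hQ1 z, hQ2 z]
  exact this (Set.mem_univ z)

lemma exists_poly_ae_eq (hn : 0 < n) (ha : ∀ i, 1 ≤ a i) {q : ℝ≥0∞} (hq : 1 ≤ q)
    {s : ℕ} {g : (Fin n → ℝ) → ℂ} (hg : LocLp q g) (x0 : Fin n → ℝ) {r : ℝ} (hr : 0 < r)
    (hsmall : ∀ ε : ℝ≥0∞, 0 < ε → ∃ P, IsPolyDeg s P ∧
      eLpNorm (fun y => g y - P y) q (volume.restrict (aball a x0 r)) < ε) :
    ∃ P, IsPolyDeg s P ∧ g =ᵐ[volume.restrict (aball a x0 r)] P := by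
  haveI : Fact (1 ≤ q) := ⟨hq⟩
  set B := aball a x0 r with hBdef
  set μB := volume.restrict B with hμBdef
  obtain ⟨R, hR0, hsub⟩ := aball_subset_box ha x0 hr
  set K := Set.pi Set.univ (fun i => Set.Icc (x0 i - R i) (x0 i + R i)) with hKdef
  have hK : IsCompact K := isCompact_univ_pi (fun i => isCompact_Icc)
  haveI : IsFiniteMeasure μB := ⟨by
    rw [hμBdef, Measure.restrict_apply_univ]
    exact (volume_aball_ne_top ha x0 hr).lt_top⟩
  have hBopen : IsOpen B := isOpen_aball ha x0 hr
  have hgB : MemLp g q μB :=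
    (hg K hK).mono_measure (Measure.restrict_mono hsub le_rfl)
  have hmemP : ∀ P : (Fin n → ℝ) → ℂ, IsPolyDeg s P → MemLp P q μB := by
    intro P hP
    have hcont := polyDeg_continuous hP
    obtain ⟨C, hC⟩ := hK.exists_bound_of_continuousOn hcont.continuousOn
    apply MemLp.of_bound hcont.aestronglyMeasurable C
    filter_upwards [ae_restrict_mem hBopen.measurableSet] with y hy
    exact hC y (hsub hy)
  -- index type for monomials
  set mf : {α : Fin n → Fin (s+1) // ∑ i, (α i : ℕ) ≤ s} → (Fin n → ℝ) → ℂ :=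
    fun α x => ∏ i, (x i : ℂ) ^ ((α.1 i : ℕ)) with hmfdef
  have hmfpoly : ∀ α, IsPolyDeg s (mf α) := by
    intro α
    refine ⟨∏ i, (MvPolynomial.X i) ^ ((α.1 i : ℕ)), ?_, ?_⟩
    · calc (∏ i, (MvPolynomial.X (R := ℂ) i) ^ ((α.1 i : ℕ))).totalDegree
          ≤ ∑ i, ((MvPolynomial.X (R := ℂ) i) ^ ((α.1 i : ℕ))).totalDegree :=
            MvPolynomial.totalDegree_finset_prod _ _
        _ = ∑ i, (α.1 i : ℕ) := by
            apply Finset.sum_congr rfl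
            intro i _
            exact MvPolynomial.totalDegree_X_pow _ _
        _ ≤ s := α.2
    · intro x
      simp [hmfdef]
  set v : {α : Fin n → Fin (s+1) // ∑ i, (α i : ℕ) ≤ s} → Lp ℂ q μB :=
    fun α => (hmemP _ (hmfpoly α)).toLp (mf α) with hvdef
  set V := Submodule.span ℂ (Set.range v) with hVdef
  haveI : FiniteDimensional ℂ V := FiniteDimensional.span_of_finite ℂ (Set.finite_range v)
  have hVclosed : IsClosed (V : Set (Lp ℂ q μB)) := Submodule.closed_of_finiteDimensional V
  -- coeFn of finite sums
  have hcoe_sum : ∀ (t : Finset {α : Fin n → Fin (s+1) // ∑ i, (α i : ℕ) ≤ s})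
      (c : {α : Fin n → Fin (s+1) // ∑ i, (α i : ℕ) ≤ s} → ℂ),
      (⇑(∑ α ∈ t, c α • v α) : (Fin n → ℝ) → ℂ) =ᵐ[μB] fun x => ∑ α ∈ t, c α * mf α x := by
    intro t c
    induction t using Finset.induction_on with
    | empty =>
      simp only [Finset.sum_empty]
      exact Lp.coeFn_zero ℂ q μB
    | @insert α t hα ih =>
      have h1 : (⇑(∑ β ∈ insert α t, c β • v β) : (Fin n → ℝ) → ℂ)
          =ᵐ[μB] ⇑(c α • v α) + ⇑(∑ β ∈ t, c β • v β) := by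
        rw [Finset.sum_insert hα]
        exact Lp.coeFn_add _ _
      have h2 : (⇑(c α • v α) : (Fin n → ℝ) → ℂ) =ᵐ[μB] fun x => c α * mf α x := by
        have := Lp.coeFn_smul (c α) (v α)
        have h3 : (⇑(v α) : (Fin n → ℝ) → ℂ) =ᵐ[μB] mf α := MemLp.coeFn_toLp _
        filter_upwards [this, h3] with x hx hx3
        rw [hx]
        simp [hx3]
      filter_upwards [h1, h2, ih] with x hx1 hx2 hih
      rw [hx1]
      simp only [Pi.add_apply, hx2, hih, Finset.sum_insert hα]
  -- polynomial combinations of monomials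
  have hpolysum : ∀ c : {α : Fin n → Fin (s+1) // ∑ i, (α i : ℕ) ≤ s} → ℂ,
      IsPolyDeg s (fun x => ∑ α, c α * mf α x) := by
    intro c
    refine ⟨∑ α, MvPolynomial.C (c α) * ∏ i, (MvPolynomial.X i) ^ ((α.1 i : ℕ)), ?_, ?_⟩
    · refine le_trans (MvPolynomial.totalDegree_finset_sum _ _) ?_
      apply Finset.sup_le
      intro α _
      refine le_trans (MvPolynomial.totalDegree_mul _ _) ?_
      rw [MvPolynomial.totalDegree_C, zero_add]
      calc (∏ i, (MvPolynomial.X (R := ℂ) i) ^ ((α.1 i : ℕ))).totalDegree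
          ≤ ∑ i, ((MvPolynomial.X (R := ℂ) i) ^ ((α.1 i : ℕ))).totalDegree :=
            MvPolynomial.totalDegree_finset_prod _ _
        _ = ∑ i, (α.1 i : ℕ) := by
            apply Finset.sum_congr rfl
            intro i _
            exact MvPolynomial.totalDegree_X_pow _ _
        _ ≤ s := α.2
    · intro x
      simp [hmfdef]
  -- membership of toLp of a polynomial in V
  have hmemV : ∀ (P : (Fin n → ℝ) → ℂ) (hP : IsPolyDeg s P),
      (hmemP P hP).toLp P ∈ V := by
    intro P hP
    obtain ⟨Q, hQd, hQe⟩ := hP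
    set fOf : {α : Fin n → Fin (s+1) // ∑ i, (α i : ℕ) ≤ s} → (Fin n →₀ ℕ) :=
      fun α => Finsupp.equivFunOnFinite.symm (fun i => (α.1 i : ℕ)) with hfOf
    have hfOf_apply : ∀ α i, fOf α i = (α.1 i : ℕ) := by
      intro α i
      simp [hfOf]
    have hfOf_inj : Function.Injective fOf := by
      intro α β h
      apply Subtype.ext
      funext i
      have := congrArg (fun d => d i) h
      simp only [hfOf] at this
      simpa [Fin.ext_iff] using this
    set c : {α : Fin n → Fin (s+1) // ∑ i, (α i : ℕ) ≤ s} → ℂ :=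
      fun α => Q.coeff (fOf α) with hcdef
    set S : Finset (Fin n →₀ ℕ) := Finset.univ.image fOf with hSdef
    have hsupS : Q.support ⊆ S := by
      intro d hd
      have hdsum : (∑ i, d i) ≤ s := by
        have h1 : d.sum (fun _ e => e) ≤ Q.totalDegree := MvPolynomial.le_totalDegree hd
        have h2 : d.sum (fun _ e => e) = ∑ i, d i := Finsupp.sum_fintype _ _ (fun i => rfl)
        rw [h2] at h1
        exact le_trans h1 hQd
      have hdi : ∀ i, d i ≤ s := by
        intro i
        refine le_trans ?_ hdsum
        exact Finset.single_le_sum (f := fun j => d j) (fun j _ => Nat.zero_le _)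
          (Finset.mem_univ i)
      have hsum' : ∑ i, ((⟨d i, Nat.lt_succ_of_le (hdi i)⟩ : Fin (s+1)) : ℕ) ≤ s := by
        simpa using hdsum
      refine Finset.mem_image.mpr ⟨⟨fun i => ⟨d i, Nat.lt_succ_of_le (hdi i)⟩, hsum'⟩,
        Finset.mem_univ _, ?_⟩
      apply Finsupp.ext
      intro i
      rw [hfOf_apply]
    have hPsum : ∀ x : Fin n → ℝ, P x = ∑ α, c α * mf α x := by
      intro x
      rw [hQe x, MvPolynomial.eval_eq']
      have h1 : ∑ α, c α * mf α x
          = ∑ d ∈ S, Q.coeff d * ∏ i, (x i : ℂ) ^ (d i) := by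
        rw [hSdef, Finset.sum_image (fun α _ β _ h => hfOf_inj h)]
        apply Finset.sum_congr rfl
        intro α _
        have hprod : (∏ i, (x i : ℂ) ^ ((fOf α) i)) = mf α x :=
          Finset.prod_congr rfl (fun i _ => by rw [hfOf_apply])
        rw [hprod]
      rw [h1]
      exact Finset.sum_subset hsupS (fun d _ hd => by
        rw [MvPolynomial.notMem_support_iff.mp hd, zero_mul])
    have heq : (hmemP P ⟨Q, hQd, hQe⟩).toLp P = ∑ α, c α • v α := by
      apply Lp.ext
      have h1 : (⇑((hmemP P ⟨Q, hQd, hQe⟩).toLp P) : (Fin n → ℝ) → ℂ) =ᵐ[μB] P :=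
        MemLp.coeFn_toLp _
      filter_upwards [h1, hcoe_sum Finset.univ c] with x hx1 hx2
      rw [hx1, hx2, ← hPsum x]
    rw [heq]
    exact Submodule.sum_mem V fun α _ =>
      Submodule.smul_mem V _ (Submodule.subset_span (Set.mem_range_self α))
  -- the Lp element of g lies in V
  have hgV : hgB.toLp g ∈ V := by
    have : hgB.toLp g ∈ closure (V : Set (Lp ℂ q μB)) := by
      rw [Metric.mem_closure_iff]
      intro ε hε
      obtain ⟨P, hP, hlt⟩ := hsmall (ENNReal.ofReal ε) (ENNReal.ofReal_pos.mpr hε)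
      refine ⟨(hmemP P hP).toLp P, hmemV P hP, ?_⟩
      rw [dist_eq_norm, ← MemLp.toLp_sub hgB (hmemP P hP), Lp.norm_toLp]
      exact ENNReal.toReal_lt_of_lt_ofReal hlt
    rwa [hVclosed.closure_eq] at this
  obtain ⟨c, hc⟩ := (Submodule.mem_span_range_iff_exists_fun ℂ).mp (hVdef ▸ hgV)
  refine ⟨fun x => ∑ α, c α * mf α x, hpolysum c, ?_⟩
  have h1 : (⇑(hgB.toLp g) : (Fin n → ℝ) → ℂ) =ᵐ[μB] g := MemLp.coeFn_toLp _
  have h2 := hcoe_sum Finset.univ c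
  rw [hc] at h2
  filter_upwards [h1, h2] with x hx1 hx2
  rw [← hx1, hx2]

end CampAux

open CampAux in
theorem statement14 {n : ℕ} (hn : 0 < n) (a : Fin n → ℝ) (ha : ∀ i, 1 ≤ a i)
    (p : Fin n → ℝ≥0∞) (hp0 : ∀ i, 0 < p i) (q : ℝ≥0∞) (hq : 1 ≤ q) (s : ℕ)
    (g : (Fin n → ℝ) → ℂ) (hg : LocLp q g) :
    campanatoNorm a p q s g = 0 ↔
      ∃ P, IsPolyDeg s P ∧ ∀ᵐ x ∂(volume : Measure (Fin n → ℝ)), g x = P x := by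
  have hq0 : q ≠ 0 := by
    intro h
    rw [h] at hq
    exact absurd hq (by simp)
  constructor
  · intro h
    -- for each k, find a polynomial agreeing with g a.e. on the ball of radius k+1
    have hball : ∀ k : ℕ, ∃ P, IsPolyDeg s P ∧
        g =ᵐ[volume.restrict (aball a 0 ((k : ℝ) + 1))] P := by
      intro k
      have hrk : (0:ℝ) < (k : ℝ) + 1 := by positivity
      apply exists_poly_ae_eq hn ha hq hg 0 hrk
      intro ε hε
      set B := aball a (0 : Fin n → ℝ) ((k : ℝ) + 1) with hBdef
      have hmem : B ∈ aballs a := ⟨0, (k : ℝ) + 1, hrk, rfl⟩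
      have hvol0 : volume B ≠ 0 := (volume_aball_pos hn ha 0 hrk).ne'
      have hvolt : volume B ≠ ∞ := volume_aball_ne_top ha 0 hrk
      have hchit : chiNorm p B ≠ ∞ := chiNorm_aball_ne_top ha hp0 0 hrk
      have hc0 : volume B / chiNorm p B ≠ 0 := (ENNReal.div_pos hvol0 hchit).ne'
      have hinf : (⨅ P ∈ {P : (Fin n → ℝ) → ℂ | IsPolyDeg s P},
          volume B / chiNorm p B *
            (if q = ∞ then essSup (fun x => (‖g x - P x‖₊ : ℝ≥0∞)) (volume.restrict B)
             else ((volume B)⁻¹ * ∫⁻ x in B, (‖g x - P x‖₊ : ℝ≥0∞) ^ q.toReal)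
               ^ (1 / q.toReal))) = 0 := by
        apply le_antisymm _ zero_le
        rw [← h]
        show _ ≤ ⨆ B ∈ aballs a, ⨅ P ∈ {P : (Fin n → ℝ) → ℂ | IsPolyDeg s P},
          volume B / chiNorm p B *
            (if q = ∞ then essSup (fun x => (‖g x - P x‖₊ : ℝ≥0∞)) (volume.restrict B)
             else ((volume B)⁻¹ * ∫⁻ x in B, (‖g x - P x‖₊ : ℝ≥0∞) ^ q.toReal)
               ^ (1 / q.toReal))
        exact le_biSup (fun B => ⨅ P ∈ {P : (Fin n → ℝ) → ℂ | IsPolyDeg s P},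
          volume B / chiNorm p B *
            (if q = ∞ then essSup (fun x => (‖g x - P x‖₊ : ℝ≥0∞)) (volume.restrict B)
             else ((volume B)⁻¹ * ∫⁻ x in B, (‖g x - P x‖₊ : ℝ≥0∞) ^ q.toReal)
               ^ (1 / q.toReal))) hmem
      have hex : ∀ ε' : ℝ≥0∞, 0 < ε' → ∃ P, IsPolyDeg s P ∧
          volume B / chiNorm p B *
            (if q = ∞ then essSup (fun x => (‖g x - P x‖₊ : ℝ≥0∞)) (volume.restrict B)
             else ((volume B)⁻¹ * ∫⁻ x in B, (‖g x - P x‖₊ : ℝ≥0∞) ^ q.toReal)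
               ^ (1 / q.toReal)) < ε' := by
        intro ε' hε'
        have h1 := hinf.trans_lt hε'
        simp only [iInf_lt_iff] at h1
        obtain ⟨P, hP, hlt⟩ := h1
        exact ⟨P, hP, hlt⟩
      have hosc : ∀ δ : ℝ≥0∞, 0 < δ → ∃ P, IsPolyDeg s P ∧
          (if q = ∞ then essSup (fun x => (‖g x - P x‖₊ : ℝ≥0∞)) (volume.restrict B)
           else ((volume B)⁻¹ * ∫⁻ x in B, (‖g x - P x‖₊ : ℝ≥0∞) ^ q.toReal)
             ^ (1 / q.toReal)) < δ := by
        intro δ hδ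
        by_cases hctop : volume B / chiNorm p B = ∞
        · obtain ⟨P, hP, hlt⟩ := hex 1 one_pos
          refine ⟨P, hP, ?_⟩
          have hzero : (if q = ∞ then essSup (fun x => (‖g x - P x‖₊ : ℝ≥0∞))
              (volume.restrict B)
             else ((volume B)⁻¹ * ∫⁻ x in B, (‖g x - P x‖₊ : ℝ≥0∞) ^ q.toReal)
               ^ (1 / q.toReal)) = 0 := by
            by_contra hne
            rw [hctop, ENNReal.top_mul hne] at hlt
            exact absurd hlt (by simp)
          rw [hzero]
          exact hδ
        · obtain ⟨P, hP, hlt⟩ := hex (volume B / chiNorm p B * δ)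
            (ENNReal.mul_pos hc0 hδ.ne')
          exact ⟨P, hP, (ENNReal.mul_lt_mul_iff_right hc0 hctop).mp hlt⟩
      by_cases hqtop : q = ∞
      · obtain ⟨P, hP, hlt⟩ := hosc ε hε
        rw [if_pos hqtop] at hlt
        refine ⟨P, hP, ?_⟩
        rw [hqtop, eLpNorm_exponent_top]
        exact hlt
      · have hr0 : 0 < q.toReal := ENNReal.toReal_pos hq0 hqtop
        have h1r : (0:ℝ) ≤ 1 / q.toReal := by positivity
        set K := (volume B) ^ (1 / q.toReal) with hKdef
        have hK0 : K ≠ 0 := by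
          rw [hKdef]
          simp [ENNReal.rpow_eq_zero_iff, hvol0, hvolt]
        have hKt : K ≠ ∞ := (ENNReal.rpow_lt_top_of_nonneg h1r hvolt).ne
        obtain ⟨P, hP, hlt⟩ := hosc (ε / K) (ENNReal.div_pos hε.ne' hKt)
        rw [if_neg hqtop] at hlt
        refine ⟨P, hP, ?_⟩
        have hrel : eLpNorm (fun y => g y - P y) q (volume.restrict B)
            = ((volume B)⁻¹ * ∫⁻ x in B, (‖g x - P x‖₊ : ℝ≥0∞) ^ q.toReal)
                ^ (1 / q.toReal) * K := by
          have hcancel : ((volume B)⁻¹ * ∫⁻ x in B, (‖g x - P x‖₊ : ℝ≥0∞) ^ q.toReal)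
              * volume B = ∫⁻ x in B, (‖g x - P x‖₊ : ℝ≥0∞) ^ q.toReal := by
            rw [mul_comm ((volume B)⁻¹) _, mul_assoc, ENNReal.inv_mul_cancel hvol0 hvolt,
              mul_one]
          rw [hKdef, ← ENNReal.mul_rpow_of_nonneg _ _ h1r, hcancel,
            eLpNorm_eq_lintegral_rpow_enorm_toReal hq0 hqtop]
          simp only [enorm_eq_nnnorm]
        rw [hrel]
        exact ENNReal.mul_lt_of_lt_div hlt
    choose P hP hPae using hball
    obtain ⟨δ, hδ0, hballsub⟩ := ball_subset_aball hn ha (0 : Fin n → ℝ) one_pos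
    have hsubball : ∀ k : ℕ, Metric.ball (0 : Fin n → ℝ) δ ⊆ aball a 0 ((k : ℝ) + 1) := by
      intro k
      refine hballsub.trans (aball_mono 0 ?_)
      have : (0:ℝ) ≤ (k : ℝ) := Nat.cast_nonneg k
      linarith
    have hae2 : ∀ k : ℕ, P k =ᵐ[volume.restrict (Metric.ball (0 : Fin n → ℝ) δ)] P 0 := by
      intro k
      have h1 : g =ᵐ[volume.restrict (Metric.ball (0 : Fin n → ℝ) δ)] P k :=
        Filter.EventuallyEq.filter_mono (hPae k)
          (ae_mono (Measure.restrict_mono (hsubball k) le_rfl))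
      have h2 : g =ᵐ[volume.restrict (Metric.ball (0 : Fin n → ℝ) δ)] P 0 :=
        Filter.EventuallyEq.filter_mono (hPae 0)
          (ae_mono (Measure.restrict_mono (hsubball 0) le_rfl))
      exact h1.symm.trans h2
    have heqk : ∀ k : ℕ, P k = P 0 := by
      intro k
      have hEq : Set.EqOn (P k) (P 0) (Metric.ball (0 : Fin n → ℝ) δ) :=
        Measure.eqOn_open_of_ae_eq (hae2 k) Metric.isOpen_ball
          (polyDeg_continuous (hP k)).continuousOn (polyDeg_continuous (hP 0)).continuousOn
      exact polyDeg_eq_of_eqOn_ball (hP k) (hP 0) hδ0 hEq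
    refine ⟨P 0, hP 0, ?_⟩
    have hk0 : ∀ k : ℕ,
        volume.restrict (aball a 0 ((k : ℝ) + 1)) {x | ¬ g x = P 0 x} = 0 := by
      intro k
      have h1 : g =ᵐ[volume.restrict (aball a 0 ((k : ℝ) + 1))] P 0 := by
        rw [← heqk k]
        exact hPae k
      exact h1
    rw [MeasureTheory.ae_iff]
    have hcover := iUnion_aball (a := a) ha
    have hNsub : {x | ¬ g x = P 0 x} ⊆
        ⋃ k : ℕ, ({x | ¬ g x = P 0 x} ∩ aball a 0 ((k : ℝ) + 1)) := by
      intro x hx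
      have hx2 : x ∈ ⋃ k : ℕ, aball a 0 ((k : ℝ) + 1) := by
        rw [hcover]; trivial
      obtain ⟨k, hk⟩ := Set.mem_iUnion.mp hx2
      exact Set.mem_iUnion.mpr ⟨k, hx, hk⟩
    refine le_antisymm ?_ zero_le
    calc volume {x | ¬ g x = P 0 x}
        ≤ ∑' k : ℕ, volume ({x | ¬ g x = P 0 x} ∩ aball a 0 ((k : ℝ) + 1)) :=
          le_trans (measure_mono hNsub) (measure_iUnion_le _)
      _ = 0 := by
          have hz : ∀ k : ℕ,
              volume ({x | ¬ g x = P 0 x} ∩ aball a 0 ((k : ℝ) + 1)) = 0 := by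
            intro k
            rw [← Measure.restrict_apply' (isOpen_aball ha 0 (by positivity :
              (0:ℝ) < (k : ℝ) + 1)).measurableSet]
            exact hk0 k
          simp [hz]
  · rintro ⟨P, hP, hPae⟩
    apply le_antisymm _ zero_le
    apply iSup₂_le
    intro B hB
    obtain ⟨x, r, hr, rfl⟩ := hB
    refine le_trans (iInf₂_le P hP) (le_of_eq ?_)
    have hae : ∀ᵐ y ∂(volume.restrict (aball a x r)), g y = P y :=
      Filter.EventuallyEq.filter_mono hPae (ae_mono Measure.restrict_le_self)
    by_cases hqtop : q = ∞
    · rw [if_pos hqtop]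
      have hz : essSup (fun y => (‖g y - P y‖₊ : ℝ≥0∞)) (volume.restrict (aball a x r))
          = 0 := by
        apply le_antisymm _ zero_le
        refine essSup_le_of_ae_le _ ?_
        filter_upwards [hae] with y hy
        simp [hy]
      rw [hz, mul_zero]
    · rw [if_neg hqtop]
      have hr0 : 0 < q.toReal := ENNReal.toReal_pos hq0 hqtop
      have hz : (∫⁻ y in aball a x r, (‖g y - P y‖₊ : ℝ≥0∞) ^ q.toReal) = 0 := by
        have hcong : (fun y => (‖g y - P y‖₊ : ℝ≥0∞) ^ q.toReal)
            =ᵐ[volume.restrict (aball a x r)] (fun _ => 0) := by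
          filter_upwards [hae] with y hy
          rw [hy, sub_self]
          simp [ENNReal.zero_rpow_of_pos hr0]
        rw [lintegral_congr_ae hcong, lintegral_zero]
      rw [hz, mul_zero, ENNReal.zero_rpow_of_pos (by positivity), mul_zero]
end
end
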